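/- arXiv:2605.25779 — 8 statements merged into one kernel-verified Lean document; each statement's English description precedes it below -/
import Mathlib

section
/- Let 0 ≤ a < 1 and let f(z) = (z + a)/(1 + a z). If a real constant L satisfies s_𝕌(f(z₁), f(z₂)) ≤ L · s_𝕌(z₁, z₂) for all z₁, z₂ ∈ 𝕌, then L ≥ 1 + a; that is, the constant 1 + a in the distortion inequality is the best possible. -/
open Complex

/-- The triangular ratio metric in the unit disk `𝕌 = {z : ℂ | |z| < 1}`:
`s_𝕌(z₁, z₂) = |z₁ - z₂| / inf_{|w| = 1} (|z₁ - w| + |w - z₂|)`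
(for `z₁ = z₂` the numerator vanishes, so the value is `0`). -/
noncomputable def sU (z₁ z₂ : ℂ) : ℝ :=
  ‖z₁ - z₂‖ /
    sInf ((fun w => ‖z₁ - w‖ + ‖w - z₂‖) ''
      {w : ℂ | ‖w‖ = 1})

lemma sInf_real_aux (p q : ℝ) (hpq : 0 ≤ p + q) (hp : p ≤ 1) (hq : q ≤ 1) :
    sInf ((fun w => ‖(p:ℂ) - w‖ + ‖w - (q:ℂ)‖) ''
      {w : ℂ | ‖w‖ = 1}) = 2 - p - q := by
  have hmem : (2 - p - q) ∈ ((fun w => ‖(p:ℂ) - w‖ + ‖w - (q:ℂ)‖) ''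
      {w : ℂ | ‖w‖ = 1}) := by
    refine ⟨1, by simp, ?_⟩
    have e1 : ((p:ℂ) - 1) = ((p - 1 : ℝ) : ℂ) := by push_cast; ring
    have e2 : ((1:ℂ) - (q:ℂ)) = ((1 - q : ℝ) : ℂ) := by push_cast; ring
    simp only [e1, e2, Complex.norm_real, Real.norm_eq_abs]
    rw [_root_.abs_of_nonpos (by linarith), _root_.abs_of_nonneg (by linarith)]
    ring
  apply le_antisymm
  · exact csInf_le ⟨0, by rintro y ⟨w, hw, rfl⟩; positivity⟩ hmem
  · apply le_csInf ⟨_, hmem⟩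
    rintro b ⟨w, hw, rfl⟩
    simp only [Set.mem_setOf_eq] at hw
    have key : ‖2*w - ((p:ℂ)+q)‖ ≤
        ‖(p:ℂ) - w‖ + ‖w - (q:ℂ)‖ := by
      calc ‖2*w - ((p:ℂ)+q)‖ = ‖(w - p) + (w - q)‖ := by ring_nf
        _ ≤ ‖w - p‖ + ‖w - q‖ := norm_add_le _ _
        _ = ‖(p:ℂ) - w‖ + ‖w - q‖ := by
            rw [← norm_neg (w - p)]; ring_nf
    have h2 : 2 - (p + q) ≤ ‖2*w - ((p:ℂ)+q)‖ := by
      have := norm_sub_norm_le (2*w) ((p:ℂ)+q)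
      have e3 : ‖2*w‖ = 2 := by
        rw [norm_mul, hw]; simp
      have e4 : ‖(p:ℂ)+q‖ = p + q := by
        rw [show ((p:ℂ)+q) = ((p+q : ℝ) : ℂ) by push_cast; ring, Complex.norm_real, Real.norm_eq_abs,
          _root_.abs_of_nonneg hpq]
      rw [e3, e4] at this
      linarith
    simp only []
    linarith

lemma sU_real (p q : ℝ) (hpq : 0 ≤ p + q) (hp : p ≤ 1) (hq : q ≤ 1) :
    sU (p:ℂ) (q:ℂ) = |p - q| / (2 - p - q) := by
  unfold sU
  rw [sInf_real_aux p q hpq hp hq]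
  congr 1
  rw [show ((p:ℂ) - q) = ((p - q : ℝ) : ℂ) by push_cast; ring, Complex.norm_real, Real.norm_eq_abs]

theorem moebius_distortion_sharp (a : ℝ) (ha0 : 0 ≤ a) (ha1 : a < 1)
    (f : ℂ → ℂ) (hf : ∀ z : ℂ, f z = (z + (a : ℂ)) / (1 + (a : ℂ) * z))
    (L : ℝ)
    (hL : ∀ z₁ z₂ : ℂ, ‖z₁‖ < 1 → ‖z₂‖ < 1 →
      sU (f z₁) (f z₂) ≤ L * sU z₁ z₂) :
    1 + a ≤ L := by
  -- key pointwise inequality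
  have key : ∀ x : ℝ, 0 < x → x < 1 → 1 + a ≤ L * (1 + a * x^2) := by
    intro x hx0 hx1
    have hax : a * x < 1 := by nlinarith
    have hd1 : (0:ℝ) < 1 + a * x := by nlinarith
    have hd2 : (0:ℝ) < 1 - a * x := by linarith
    set p := (x + a) / (1 + a * x) with hp_def
    set q := (a - x) / (1 - a * x) with hq_def
    have hd1c : (1 + (a:ℂ) * x) ≠ 0 := by
      rw [show (1 + (a:ℂ) * x) = ((1 + a * x : ℝ) : ℂ) by push_cast; ring]
      exact_mod_cast hd1.ne'
    have hd2c : (1 + (a:ℂ) * (-x)) ≠ 0 := by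
      rw [show (1 + (a:ℂ) * (-x)) = ((1 - a * x : ℝ) : ℂ) by push_cast; ring]
      exact_mod_cast hd2.ne'
    have hfx : f (x:ℂ) = (p : ℂ) := by
      rw [hf, hp_def]
      push_cast
      rfl

    have hfx' : f (-(x:ℂ)) = (q : ℂ) := by
      rw [hf, hq_def]
      push_cast
      ring_nf
    have h := hL (x:ℂ) (-(x:ℂ)) (by rw [Complex.norm_real, Real.norm_eq_abs, abs_of_pos hx0]; exact hx1)
      (by rw [norm_neg, Complex.norm_real, Real.norm_eq_abs, abs_of_pos hx0]; exact hx1)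
    rw [hfx, hfx'] at h
    -- compute sU x (-x)
    have hsxx : sU (x:ℂ) (-(x:ℂ)) = x := by
      rw [show (-(x:ℂ)) = (((-x : ℝ)) : ℂ) by push_cast; ring,
        sU_real x (-x) (by linarith) (by linarith) (by linarith)]
      rw [abs_of_pos (by linarith : (0:ℝ) < x - -x)]
      ring_nf
    -- arithmetic facts about p and q
    have hppq : 0 ≤ p + q := by
      rw [hp_def, hq_def]
      have h1 : (x + a) / (1 + a * x) + (a - x) / (1 - a * x)
          = (2 * a * (1 - x^2)) / ((1 + a * x) * (1 - a * x)) := by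
        rw [eq_div_iff (mul_pos hd1 hd2).ne']
        linear_combination (1 - a * x) * (div_mul_cancel₀ (x + a) hd1.ne') + (1 + a * x) * (div_mul_cancel₀ (a - x) hd2.ne')
      rw [h1]
      have : 0 ≤ 1 - x^2 := by nlinarith
      positivity
    have hp1 : p ≤ 1 := by
      rw [hp_def, div_le_one hd1]; nlinarith
    have hq1 : q ≤ 1 := by
      rw [hq_def, div_le_one hd2]; nlinarith
    have hpq_diff : p - q = 2 * x * (1 - a^2) / ((1 + a * x) * (1 - a * x)) := by
      rw [hp_def, hq_def]; rw [eq_div_iff (mul_pos hd1 hd2).ne']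
      linear_combination (1 - a * x) * (div_mul_cancel₀ (x + a) hd1.ne') - (1 + a * x) * (div_mul_cancel₀ (a - x) hd2.ne')
    have hden : 2 - p - q = 2 * (1 - a) * (1 + a * x^2) / ((1 + a * x) * (1 - a * x)) := by
      rw [hp_def, hq_def]; rw [eq_div_iff (mul_pos hd1 hd2).ne']
      linear_combination (-(1 - a * x)) * (div_mul_cancel₀ (x + a) hd1.ne') - (1 + a * x) * (div_mul_cancel₀ (a - x) hd2.ne')
    have hpq_nonneg : 0 ≤ p - q := by
      rw [hpq_diff]
      have : 0 ≤ 1 - a^2 := by nlinarith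
      positivity
    have hsU : sU (p:ℂ) (q:ℂ) = x * (1 + a) / (1 + a * x^2) := by
      rw [sU_real p q hppq hp1 hq1, _root_.abs_of_nonneg hpq_nonneg, hpq_diff, hden]
      have h1a : (0:ℝ) < 1 - a := by linarith
      have hax2 : (0:ℝ) < 1 + a * x^2 := by positivity
      rw [div_div_div_cancel_right₀ (mul_pos hd1 hd2).ne', div_eq_div_iff (mul_pos (mul_pos two_pos h1a) hax2).ne' hax2.ne']
      ring
    rw [hsU, hsxx] at h
    have hax2 : (0:ℝ) < 1 + a * x^2 := by positivity
    rw [div_le_iff₀ hax2] at h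
    nlinarith
  -- take the limit x → 0 along 1/(n+2)
  have hseq : ∀ n : ℕ, 1 + a ≤ L * (1 + a * (1 / ((n:ℝ) + 2))^2) := by
    intro n
    have h2 : (0:ℝ) < (n:ℝ) + 2 := by positivity
    apply key
    · positivity
    · rw [div_lt_one h2]; linarith
  have htend : Filter.Tendsto (fun n : ℕ => L * (1 + a * (1 / ((n:ℝ) + 2))^2))
      Filter.atTop (nhds L) := by
    have h0 : Filter.Tendsto (fun n : ℕ => 1 / ((n:ℝ) + 2)) Filter.atTop (nhds 0) := by
      simp only [one_div]
      exact Filter.Tendsto.comp tendsto_inv_atTop_zero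
        (Filter.tendsto_atTop_add_const_right _ 2 tendsto_natCast_atTop_atTop)
    have : Filter.Tendsto (fun n : ℕ => L * (1 + a * (1 / ((n:ℝ) + 2))^2))
        Filter.atTop (nhds (L * (1 + a * 0^2))) := by
      exact (Filter.Tendsto.const_mul L ((Filter.Tendsto.const_mul a (h0.pow 2)).const_add 1))
    simpa using this
  exact ge_of_tendsto' htend hseq
end

section
/- For all z₁, z₂ ∈ 𝕌 with z₁ ≠ z₂, one has s_𝕌(z₁, z₂) = sup_{θ ∈ ℝ} |z₁ − z₂| / |2 − e^{−iθ} z₁ − e^{iθ} conj(z₂)|; equivalently, inf_{|w| = 1} (|z₁ − w| + |w − z₂|) = inf_{θ ∈ ℝ} |2 − e^{−iθ} z₁ − e^{iθ} conj(z₂)|. -/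
open Complex

lemma proj_le (z w : ℂ) (hz : ‖z‖ < 1) (hw : 1 ≤ ‖w‖) :
    ‖(z - w / (‖w‖ : ℂ))‖ ≤ ‖(z - w)‖ := by
  have hr : (0:ℝ) < ‖w‖ := lt_of_lt_of_le one_pos hw
  have h1 : normSq (w / (‖w‖ : ℂ)) = 1 := by
    rw [normSq_div]
    simp only [Complex.normSq_ofReal, Complex.normSq_eq_norm_sq, Complex.norm_real, norm_norm]
    field_simp
  have h2 : (z * (starRingEnd ℂ) (w / (‖w‖ : ℂ))).re
      = (z * (starRingEnd ℂ) w).re / ‖w‖ := by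
    rw [map_div₀, Complex.conj_ofReal, ← mul_div_assoc]
    exact Complex.div_ofReal_re _ _
  have key : normSq (z - w / (‖w‖ : ℂ)) ≤ normSq (z - w) := by
    rw [Complex.normSq_sub, Complex.normSq_sub, h1, h2, ← Complex.sq_norm w]
    set r := ‖w‖ with hrdef
    set t := (z * (starRingEnd ℂ) w).re with ht
    have htle : t ≤ ‖z‖ * r := by
      calc t ≤ ‖(z * (starRingEnd ℂ) w)‖ := Complex.re_le_norm _
      _ = ‖z‖ * r := by rw [norm_mul, Complex.norm_conj]
    have haz : 0 ≤ ‖z‖ := norm_nonneg z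
    have h4 : (1 - 2*(t/r)) * r = r - 2*t := by field_simp
    have h5 : (1 - 2*(t/r))*r ≤ (r^2 - 2*t)*r := by
      by_contra hcon; push_neg at hcon; rw [h4] at hcon
      nlinarith [mul_nonneg (sub_nonneg.mpr hw)
        (by nlinarith [mul_lt_mul_of_pos_right hz hr] : (0:ℝ) ≤ r^2 + r - 2*t)]
    have h6 : (1 - 2*(t/r)) ≤ r^2 - 2*t := (mul_le_mul_iff_of_pos_right hr).mp h5
    linarith
  have := Real.sqrt_le_sqrt key
  rwa [← Complex.norm_def, ← Complex.norm_def] at this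

lemma refl_abs (c z p : ℂ) (hc : (starRingEnd ℂ) c * c = 1)
    (hp : ((starRingEnd ℂ) c * p).re = 1) :
    ‖(p - (2*c - c^2 * (starRingEnd ℂ) z))‖ = ‖(p - z)‖ := by
  have hsum : (starRingEnd ℂ) c * p + c * (starRingEnd ℂ) p = 2 := by
    simpa [map_mul, hp] using Complex.add_conj ((starRingEnd ℂ) c * p)
  have hid : p - (2*c - c^2 * (starRingEnd ℂ) z) = -(c^2 * (starRingEnd ℂ) (p - z)) := by
    rw [map_sub]; linear_combination c * hsum - p * hc
  have hcabs : ‖c‖ = 1 := by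
    have := congrArg norm hc
    rw [norm_mul, Complex.norm_conj, norm_one] at this
    nlinarith [norm_nonneg c]
  rw [hid, norm_neg, norm_mul, norm_pow, hcabs, Complex.norm_conj]
  ring

lemma key_abs (c z₁ z₂ : ℂ) (hc : (starRingEnd ℂ) c * c = 1) :
    ‖(2 - (starRingEnd ℂ) c * z₁ - c * (starRingEnd ℂ) z₂)‖
      = ‖(z₁ - (2*c - c^2 * (starRingEnd ℂ) z₂))‖ := by
  have hcabs : ‖c‖ = 1 := by
    have := congrArg norm hc
    rw [norm_mul, Complex.norm_conj, norm_one] at this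
    nlinarith [norm_nonneg c]
  have hid : z₁ - (2*c - c^2 * (starRingEnd ℂ) z₂)
      = -(c * (2 - (starRingEnd ℂ) c * z₁ - c * (starRingEnd ℂ) z₂)) := by
    linear_combination (-z₁) * hc
  rw [hid, norm_neg, norm_mul, hcabs, one_mul]


theorem sU_eq_sup_halfplanes (z₁ z₂ : ℂ)
    (hz₁ : ‖z₁‖ < 1) (hz₂ : ‖z₂‖ < 1) (hne : z₁ ≠ z₂) :
    (sU z₁ z₂ = ⨆ θ : ℝ, ‖z₁ - z₂‖ /
        ‖2 - Complex.exp (-(θ : ℂ) * Complex.I) * z₁ -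
          Complex.exp ((θ : ℂ) * Complex.I) * (starRingEnd ℂ) z₂‖) ∧
      sInf ((fun w => ‖z₁ - w‖ + ‖w - z₂‖) ''
          {w : ℂ | ‖w‖ = 1}) =
        sInf (Set.range fun θ : ℝ =>
          ‖2 - Complex.exp (-(θ : ℂ) * Complex.I) * z₁ -
            Complex.exp ((θ : ℂ) * Complex.I) * (starRingEnd ℂ) z₂‖) := by
  have c0pos : 0 < ‖(z₁ - z₂)‖ := norm_pos_iff.mpr (sub_ne_zero.mpr hne)
  set c0 := ‖(z₁ - z₂)‖ with hc0
  set A : ℝ → ℝ := fun θ : ℝ =>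
    ‖(2 - Complex.exp (-(θ : ℂ) * Complex.I) * z₁ -
      Complex.exp ((θ : ℂ) * Complex.I) * (starRingEnd ℂ) z₂)‖ with hAdef
  set S := ((fun w => ‖(z₁ - w)‖ + ‖(w - z₂)‖) ''
      {w : ℂ | ‖w‖ = 1}) with hSdef
  have hexp : ∀ θ : ℝ, Complex.exp (-(θ:ℂ) * I) = (starRingEnd ℂ) (Complex.exp ((θ:ℂ)*I)) := by
    intro θ; rw [← Complex.exp_conj]; congr 1; simp
  have hcunit : ∀ θ : ℝ, (starRingEnd ℂ) (Complex.exp ((θ:ℂ)*I)) * Complex.exp ((θ:ℂ)*I) = 1 := by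
    intro θ
    rw [mul_comm, Complex.mul_conj]
    norm_cast
    rw [Complex.normSq_eq_norm_sq, Complex.norm_exp_ofReal_mul_I]; norm_num
  have hcabs : ∀ θ : ℝ, ‖(Complex.exp ((θ:ℂ)*I))‖ = 1 :=
    fun θ => Complex.norm_exp_ofReal_mul_I θ
  have hAform : ∀ θ : ℝ, A θ = ‖(z₁ - (2*Complex.exp ((θ:ℂ)*I)
      - Complex.exp ((θ:ℂ)*I)^2 * (starRingEnd ℂ) z₂))‖ := by
    intro θ
    rw [hAdef]
    simp only
    rw [hexp θ]
    exact key_abs _ z₁ z₂ (hcunit θ)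
  -- basic set facts
  have hSne : S.Nonempty := ⟨_, ⟨1, by simp, rfl⟩⟩
  have hSbdd : BddBelow S := ⟨0, by rintro x ⟨w, hw, rfl⟩; positivity⟩
  have hTne : (Set.range A).Nonempty := ⟨A 0, ⟨0, rfl⟩⟩
  have hTbdd : BddBelow (Set.range A) := ⟨0, by rintro x ⟨θ, rfl⟩; positivity⟩
  have hlow : c0 ≤ sInf S := by
    apply le_csInf hSne
    rintro x ⟨w, hw, rfl⟩
    exact norm_sub_le_norm_sub_add_norm_sub z₁ w z₂
  -- second part
  have h2 : sInf S = sInf (Set.range A) := by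
    apply le_antisymm
    · apply le_csInf hTne
      rintro x ⟨θ, rfl⟩
      set c := Complex.exp ((θ:ℂ)*I) with hcdef
      set R := 2*c - c^2 * (starRingEnd ℂ) z₂ with hRdef
      have hc : (starRingEnd ℂ) c * c = 1 := hcunit θ
      have hca : ‖c‖ = 1 := hcabs θ
      set a := ((starRingEnd ℂ) c * z₁).re with hadef
      set b := ((starRingEnd ℂ) c * z₂).re with hbdef
      have ha : a < 1 := lt_of_le_of_lt (Complex.re_le_norm _)
        (by rw [norm_mul, Complex.norm_conj, hca, one_mul]; exact hz₁)
      have hb : b < 1 := lt_of_le_of_lt (Complex.re_le_norm _)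
        (by rw [norm_mul, Complex.norm_conj, hca, one_mul]; exact hz₂)
      have hden : (0:ℝ) < 2 - a - b := by linarith
      set t : ℝ := (1 - a)/(2 - a - b) with htdef
      have ht0 : 0 ≤ t := div_nonneg (by linarith) (le_of_lt hden)
      have ht1 : t ≤ 1 := by rw [div_le_one hden]; linarith
      set p := z₁ + (t:ℂ) * (R - z₁) with hpdef
      have hcR : (starRingEnd ℂ) c * R = 2 - c * (starRingEnd ℂ) z₂ := by
        rw [hRdef]; linear_combination (2 - c * (starRingEnd ℂ) z₂) * hc
      have hcRre : ((starRingEnd ℂ) c * R).re = 2 - b := by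
        rw [hcR, Complex.sub_re]
        have : c * (starRingEnd ℂ) z₂ = (starRingEnd ℂ) ((starRingEnd ℂ) c * z₂) := by
          rw [map_mul, Complex.conj_conj]
        rw [this, Complex.conj_re, hbdef]
        norm_num
      have hpre : ((starRingEnd ℂ) c * p).re = 1 := by
        have hsplit : (starRingEnd ℂ) c * p
            = (starRingEnd ℂ) c * z₁ + (t:ℂ) * ((starRingEnd ℂ) c * R - (starRingEnd ℂ) c * z₁) := by
          rw [hpdef]; ring
        rw [hsplit, Complex.add_re, Complex.re_ofReal_mul, Complex.sub_re, hcRre, ← hadef]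
        rw [htdef]
        field_simp
        ring
      have hppos : 1 ≤ ‖p‖ := by
        calc (1:ℝ) = ((starRingEnd ℂ) c * p).re := hpre.symm
        _ ≤ ‖((starRingEnd ℂ) c * p)‖ := Complex.re_le_norm _
        _ = ‖p‖ := by rw [norm_mul, Complex.norm_conj, hca, one_mul]
      have hfp : ‖(z₁ - p)‖ + ‖(p - z₂)‖ = A θ := by
        have e1 : ‖(z₁ - p)‖ = t * ‖(z₁ - R)‖ := by
          have h : z₁ - p = (t:ℂ) * (z₁ - R) := by rw [hpdef]; ring
          rw [h, norm_mul, Complex.norm_real, Real.norm_of_nonneg ht0]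
        have e2 : ‖(p - z₂)‖ = (1-t) * ‖(z₁ - R)‖ := by
          rw [← refl_abs c z₂ p hc hpre, ← hRdef]
          have h : p - R = ((1-t:ℝ):ℂ) * (z₁ - R) := by
            rw [hpdef, Complex.ofReal_sub, Complex.ofReal_one]; ring
          rw [h, norm_mul, Complex.norm_real, Real.norm_of_nonneg (by linarith : (0:ℝ) ≤ 1 - t)]
        rw [e1, e2, hAform θ, ← hcdef, ← hRdef]
        ring
      have hpa0 : (0:ℝ) < ‖p‖ := lt_of_lt_of_le one_pos hppos
      set q := p / (‖p‖ : ℂ) with hqdef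
      have hq1 : ‖q‖ = 1 := by
        rw [hqdef, norm_div, Complex.norm_real, norm_norm, div_self (ne_of_gt hpa0)]
      calc sInf S ≤ ‖(z₁ - q)‖ + ‖(q - z₂)‖ :=
            csInf_le hSbdd ⟨q, hq1, rfl⟩
      _ ≤ ‖(z₁ - p)‖ + ‖(p - z₂)‖ := by
          apply add_le_add (proj_le z₁ p hz₁ hppos)
          rw [norm_sub_rev q z₂, norm_sub_rev p z₂]
          exact proj_le z₂ p hz₂ hppos
      _ = A θ := hfp
    · apply le_csInf hSne
      rintro x ⟨w, hw, rfl⟩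
      simp only [Set.mem_setOf_eq] at hw
      have hwc : Complex.exp ((w.arg:ℂ)*I) = w := by
        have h := Complex.norm_mul_exp_arg_mul_I w
        rwa [hw, Complex.ofReal_one, one_mul] at h
      have hwu : (starRingEnd ℂ) w * w = 1 := by
        rw [mul_comm, Complex.mul_conj]
        norm_cast
        rw [Complex.normSq_eq_norm_sq, hw]; norm_num
      have hwre : ((starRingEnd ℂ) w * w).re = 1 := by rw [hwu]; norm_num
      have hAle : A w.arg ≤ ‖(z₁ - w)‖ + ‖(w - z₂)‖ := by
        rw [hAform w.arg, hwc]
        calc ‖(z₁ - (2*w - w^2 * (starRingEnd ℂ) z₂))‖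
            ≤ ‖(z₁ - w)‖ + ‖(w - (2*w - w^2 * (starRingEnd ℂ) z₂))‖ :=
              norm_sub_le_norm_sub_add_norm_sub z₁ w _
        _ = ‖(z₁ - w)‖ + ‖(w - z₂)‖ := by
            rw [refl_abs w z₂ w hwu hwre]
      exact le_trans (csInf_le hTbdd ⟨w.arg, rfl⟩) hAle
  refine ⟨?_, h2⟩
  -- first part
  have hmpos : 0 < sInf S := lt_of_lt_of_le c0pos hlow
  have hmle : ∀ θ : ℝ, sInf S ≤ A θ := fun θ => h2 ▸ csInf_le hTbdd ⟨θ, rfl⟩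
  have hApos : ∀ θ : ℝ, 0 < A θ := fun θ => lt_of_lt_of_le hmpos (hmle θ)
  have hbdd : BddAbove (Set.range fun θ : ℝ => c0 / A θ) := by
    refine ⟨c0 / sInf S, ?_⟩
    rintro x ⟨θ, rfl⟩
    exact div_le_div_of_nonneg_left (le_of_lt c0pos) hmpos (hmle θ)
  show c0 / sInf S = ⨆ θ : ℝ, c0 / A θ
  apply le_antisymm
  · refine le_of_forall_lt fun y hy => ?_
    rcases le_or_gt y 0 with h0 | h0
    · exact lt_of_lt_of_le (lt_of_le_of_lt h0 (div_pos c0pos (hApos 0))) (le_ciSup hbdd 0)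
    · have hm2 : sInf (Set.range A) < c0 / y := by
        rw [← h2]
        rw [lt_div_iff₀ h0]
        have := (lt_div_iff₀ hmpos).mp hy
        linarith [mul_comm y (sInf S)]
      obtain ⟨x, ⟨θ, rfl⟩, hx⟩ := exists_lt_of_csInf_lt hTne hm2
      have : y < c0 / A θ := by
        rw [lt_div_iff₀ (hApos θ)]
        have := (lt_div_iff₀ h0).mp hx
        linarith [mul_comm y (A θ)]
      exact lt_of_lt_of_le this (le_ciSup hbdd θ)
  · exact ciSup_le fun θ => div_le_div_of_nonneg_left (le_of_lt c0pos) hmpos (hmle θ)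
end

section
/- Fix θ ∈ ℝ and let H_θ = {z ∈ ℂ : Re(e^{−iθ} z) < 1} be the open half-plane bounded by the line tangent to the unit circle at e^{iθ}. Then for all z₁, z₂ ∈ H_θ one has inf_{w ∈ ∂H_θ} (|z₁ − w| + |w − z₂|) = |2 e^{iθ} − z₁ − e^{2iθ} conj(z₂)| = |2 − e^{−iθ} z₁ − e^{iθ} conj(z₂)|; consequently s_{H_θ}(z₁, z₂) = |z₁ − z₂| / |2 − e^{−iθ} z₁ − e^{iθ} conj(z₂)| for z₁ ≠ z₂. -/
open Complex

/-- The triangular ratio metric of a proper nonempty subset `D ⊆ ℂ`: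
`s_D(u, v) = |u - v| / inf_{w ∈ ∂D} (|u - w| + |w - v|)`
(for `u = v` the numerator vanishes, so the value is `0`). -/
noncomputable def sD (D : Set ℂ) (u v : ℂ) : ℝ :=
  Norm.norm (u - v) /
    sInf ((fun w => Norm.norm (u - w) + Norm.norm (w - v)) '' frontier D)

theorem triangular_ratio_halfplane (θ : ℝ) (z₁ z₂ : ℂ)
    (hz₁ : z₁ ∈ {z : ℂ | (Complex.exp (-(θ : ℂ) * Complex.I) * z).re < 1})
    (hz₂ : z₂ ∈ {z : ℂ | (Complex.exp (-(θ : ℂ) * Complex.I) * z).re < 1}) :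
    sInf ((fun w => Norm.norm (z₁ - w) + Norm.norm (w - z₂)) ''
        frontier {z : ℂ | (Complex.exp (-(θ : ℂ) * Complex.I) * z).re < 1}) =
      Norm.norm (2 * Complex.exp ((θ : ℂ) * Complex.I) - z₁ -
        Complex.exp (2 * (θ : ℂ) * Complex.I) * (starRingEnd ℂ) z₂) ∧
    Norm.norm (2 * Complex.exp ((θ : ℂ) * Complex.I) - z₁ -
        Complex.exp (2 * (θ : ℂ) * Complex.I) * (starRingEnd ℂ) z₂) =
      Norm.norm (2 - Complex.exp (-(θ : ℂ) * Complex.I) * z₁ -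
        Complex.exp ((θ : ℂ) * Complex.I) * (starRingEnd ℂ) z₂) ∧
    (z₁ ≠ z₂ →
      sD {z : ℂ | (Complex.exp (-(θ : ℂ) * Complex.I) * z).re < 1} z₁ z₂ =
        Norm.norm (z₁ - z₂) /
          Norm.norm (2 - Complex.exp (-(θ : ℂ) * Complex.I) * z₁ -
            Complex.exp ((θ : ℂ) * Complex.I) * (starRingEnd ℂ) z₂)) := by
  set c : ℂ := Complex.exp (-(θ : ℂ) * Complex.I) with hc
  set e : ℂ := Complex.exp ((θ : ℂ) * Complex.I) with he
  have hce : c * e = 1 := by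
    rw [hc, he, ← Complex.exp_add]
    have h0 : -(θ : ℂ) * Complex.I + (θ : ℂ) * Complex.I = 0 := by ring
    rw [h0, Complex.exp_zero]
  have hc0 : c ≠ 0 := Complex.exp_ne_zero _
  have habsc : ‖c‖ = 1 := by
    have h : -(θ : ℂ) * Complex.I = ((-θ : ℝ) : ℂ) * Complex.I := by push_cast; ring
    rw [hc, h]; exact Complex.norm_exp_ofReal_mul_I _
  have hconjc : (starRingEnd ℂ) c = e := by
    rw [hc, he, ← Complex.exp_conj]
    congr 1
    simp [Complex.conj_I]
  have he2 : Complex.exp (2 * (θ : ℂ) * Complex.I) = e * e := by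
    rw [he, ← Complex.exp_add]; ring_nf
  set z₂' : ℂ := 2 * e - e * e * (starRingEnd ℂ) z₂ with hz2'
  -- the frontier of the half-plane
  have hfr : frontier {z : ℂ | (c * z).re < 1} = {z : ℂ | (c * z).re = 1} := by
    have h1 : {z : ℂ | (c * z).re < 1} =
        (Homeomorph.mulLeft₀ c hc0) ⁻¹' {z : ℂ | z.re < 1} := rfl
    rw [h1, ← Homeomorph.preimage_frontier, Complex.frontier_setOf_re_lt]
    rfl
  -- for points on the boundary line, distances to z₂ and its reflection z₂' agree
  have hline : ∀ w : ℂ, (c * w).re = 1 →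
      ‖w - z₂‖ = ‖w - z₂'‖ := by
    intro w hw
    have hadd : c * w + e * (starRingEnd ℂ) w = 2 := by
      have h := Complex.add_conj (c * w)
      rw [map_mul, hconjc, hw] at h
      norm_num at h
      exact h
    have h2 : c * (w - z₂') = (starRingEnd ℂ) (c * (z₂ - w)) := by
      have h3 : (starRingEnd ℂ) (c * (z₂ - w)) =
          e * (starRingEnd ℂ) z₂ - e * (starRingEnd ℂ) w := by
        rw [map_mul, map_sub, hconjc]; ring
      rw [h3, hz2']
      linear_combination hadd + (e * (starRingEnd ℂ) z₂ - 2) * hce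
    calc ‖w - z₂‖ = ‖c * (z₂ - w)‖ := by
          rw [norm_mul, habsc, one_mul]
          exact (norm_sub_rev z₂ w).symm
      _ = ‖(starRingEnd ℂ) (c * (z₂ - w))‖ := (Complex.norm_conj _).symm
      _ = ‖c * (w - z₂')‖ := by rw [← h2]
      _ = ‖w - z₂'‖ := by rw [norm_mul, habsc, one_mul]
  -- real part of c * z₂'
  have hre2' : (c * z₂').re = 2 - (c * z₂).re := by
    have h4 : c * z₂' = 2 - (starRingEnd ℂ) (c * z₂) := by
      rw [hz2', map_mul, hconjc]
      linear_combination (2 - e * (starRingEnd ℂ) z₂) * hce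
    rw [h4]
    simp [Complex.sub_re, Complex.conj_re]
  have hrez₁ : (c * z₁).re < 1 := hz₁
  have hrez₂ : (c * z₂).re < 1 := hz₂
  -- intermediate value: find a boundary point on the segment [z₁, z₂']
  have hIVT : ∃ t : ℝ, t ∈ Set.Icc (0:ℝ) 1 ∧
      (c * (z₁ + (t : ℂ) * (z₂' - z₁))).re = 1 := by
    set g : ℝ → ℝ := fun t => (c * (z₁ + (t : ℂ) * (z₂' - z₁))).re with hg
    have hcont : ContinuousOn g (Set.Icc 0 1) := by
      apply Continuous.continuousOn
      fun_prop
    have hg0 : g 0 = (c * z₁).re := by simp [hg]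
    have hg1 : g 1 = (c * z₂').re := by simp [hg]
    have hmem : (1:ℝ) ∈ Set.Icc (g 0) (g 1) := by
      constructor
      · rw [hg0]; exact le_of_lt hrez₁
      · rw [hg1, hre2']; linarith
    have := intermediate_value_Icc (by norm_num : (0:ℝ) ≤ 1) hcont hmem
    obtain ⟨t, ht, hgt⟩ := this
    exact ⟨t, ht, hgt⟩
  obtain ⟨t, ⟨ht0, ht1⟩, hw₀⟩ := hIVT
  set w₀ : ℂ := z₁ + (t : ℂ) * (z₂' - z₁) with hw₀def
  set M : ℝ := ‖z₁ - z₂'‖ with hM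
  -- value of the objective at w₀
  have hval : ‖z₁ - w₀‖ + ‖w₀ - z₂‖ = M := by
    rw [hline w₀ hw₀]
    have ha : ‖z₁ - w₀‖ = t * M := by
      have : z₁ - w₀ = (t : ℂ) * (z₁ - z₂') := by rw [hw₀def]; ring
      rw [this, norm_mul, Complex.norm_real, Real.norm_eq_abs, _root_.abs_of_nonneg ht0, hM]
    have hb : ‖w₀ - z₂'‖ = (1 - t) * M := by
      have : w₀ - z₂' = ((1 - t : ℝ) : ℂ) * (z₁ - z₂') := by
        rw [hw₀def]; push_cast; ring
      rw [this, norm_mul, Complex.norm_real, Real.norm_eq_abs, _root_.abs_of_nonneg (by linarith), hM]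
    rw [ha, hb]; ring
  -- lower bound for the objective on the frontier
  have hlb : ∀ v ∈ (fun w => Norm.norm (z₁ - w) + Norm.norm (w - z₂)) ''
      frontier {z : ℂ | (c * z).re < 1}, M ≤ v := by
    rintro v ⟨w, hwmem, rfl⟩
    rw [hfr] at hwmem
    have hwre : (c * w).re = 1 := hwmem
    simp only
    rw [hline w hwre, hM]
    exact norm_sub_le_norm_sub_add_norm_sub z₁ w z₂'
  have hmemS : M ∈ (fun w => Norm.norm (z₁ - w) + Norm.norm (w - z₂)) ''
      frontier {z : ℂ | (c * z).re < 1} := by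
    refine ⟨w₀, ?_, hval⟩
    rw [hfr]; exact hw₀
  have hsInf : sInf ((fun w => Norm.norm (z₁ - w) + Norm.norm (w - z₂)) ''
      frontier {z : ℂ | (c * z).re < 1}) = M := by
    apply le_antisymm
    · exact csInf_le ⟨M, hlb⟩ hmemS
    · exact le_csInf ⟨M, hmemS⟩ hlb
  -- identify M with the expressions in the statement
  have hMeq : ‖(2 * e - z₁ - Complex.exp (2 * (θ : ℂ) * Complex.I) *
      (starRingEnd ℂ) z₂)‖ = M := by
    rw [he2, hM]
    have h5 : 2 * e - z₁ - e * e * (starRingEnd ℂ) z₂ = -(z₁ - z₂') := by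
      rw [hz2']; ring
    rw [h5]
    exact norm_neg _
  have hsecond : ‖(2 * e - z₁ - Complex.exp (2 * (θ : ℂ) * Complex.I) *
      (starRingEnd ℂ) z₂)‖ = ‖(2 - c * z₁ - e * (starRingEnd ℂ) z₂)‖ := by
    rw [he2]
    have h6 : 2 * e - z₁ - e * e * (starRingEnd ℂ) z₂ =
        e * (2 - c * z₁ - e * (starRingEnd ℂ) z₂) + (e * c - 1) * z₁ := by
      ring
    have h7 : e * c - 1 = 0 := by linear_combination hce
    rw [h6, h7, zero_mul, add_zero, norm_mul, he, Complex.norm_exp_ofReal_mul_I, one_mul]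
  refine ⟨by rw [hsInf, hMeq], hsecond, ?_⟩
  intro _
  rw [sD, hsInf, hMeq.symm, hsecond]
end

section
/- Let z₁, z₂ ∈ 𝕌 and suppose ψ ∈ ℝ is such that e^{iψ} minimizes the function w ↦ |z₁ − w| + |w − z₂| over the unit circle {|w| = 1} (i.e., e^{iψ} is a contact point of the maximal ellipse with foci z₁, z₂ inscribed in 𝕌). Then inf_{|w| = 1} (|z₁ − w| + |w − z₂|) = |2 − e^{−iψ} z₁ − e^{iψ} conj(z₂)|; in particular, for z₁ ≠ z₂, s_𝕌(z₁, z₂) = |z₁ − z₂| / |2 − e^{−iψ} z₁ − e^{iψ} conj(z₂)|, the triangular ratio distance in the supporting half-plane of 𝕌 at e^{iψ}. -/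
open Complex

private lemma proj_le_s6 (p q : ℂ) (hq : ‖q‖ ≤ 1) (hp : 1 ≤ ‖p‖) :
    ‖q - (↑(‖p‖))⁻¹ * p‖ ≤ ‖q - p‖ := by
  have hr0 : (0:ℝ) < ‖p‖ := lt_of_lt_of_le one_pos hp
  set r := ‖p‖ with hrdef
  have hri : r * r⁻¹ = 1 := mul_inv_cancel₀ (ne_of_gt hr0)
  have hi0 : 0 ≤ r⁻¹ := le_of_lt (inv_pos.mpr hr0)
  have hi1 : r⁻¹ ≤ 1 := inv_le_one_of_one_le₀ hp
  have hr2 : p.re^2 + p.im^2 = r^2 := by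
    have h := Complex.sq_norm p
    rw [Complex.normSq_apply] at h
    nlinarith [h]
  have hq2 : q.re^2 + q.im^2 ≤ 1 := by
    have h := Complex.sq_norm q
    rw [Complex.normSq_apply] at h
    nlinarith [h, norm_nonneg q]
  have hs : q.re * p.re + q.im * p.im ≤ r := by
    have h1 : (q * (starRingEnd ℂ) p).re ≤ ‖q * (starRingEnd ℂ) p‖ :=
      Complex.re_le_norm _
    rw [norm_mul, Complex.norm_conj] at h1
    have h2 : (q * (starRingEnd ℂ) p).re = q.re * p.re + q.im * p.im := by
      simp only [Complex.mul_re, Complex.conj_re, Complex.conj_im]; ring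
    rw [h2] at h1
    calc q.re * p.re + q.im * p.im ≤ ‖q‖ * r := h1
      _ ≤ 1 * r := by nlinarith
      _ = r := one_mul r
  rw [Complex.norm_def, Complex.norm_def]
  apply Real.sqrt_le_sqrt
  rw [show ((r:ℂ))⁻¹ = ((r⁻¹:ℝ):ℂ) from (Complex.ofReal_inv r).symm]
  simp only [Complex.normSq_apply, Complex.sub_re, Complex.sub_im, Complex.mul_re,
    Complex.mul_im, Complex.ofReal_re, Complex.ofReal_im]
  ring_nf
  nlinarith [sq_nonneg (r - 1), mul_le_mul_of_nonneg_right hs (by linarith : (0:ℝ) ≤ 1 - r⁻¹), hr2, hri, hi0, hi1]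

private lemma inf_eq_contact (z₁ z₂ : ℂ)
    (hz₁ : ‖z₁‖ < 1) (hz₂ : ‖z₂‖ < 1) (ψ : ℝ)
    (hψ : ∀ w : ℂ, ‖w‖ = 1 →
      ‖z₁ - Complex.exp ((ψ : ℂ) * Complex.I)‖ +
        ‖Complex.exp ((ψ : ℂ) * Complex.I) - z₂‖ ≤
      ‖z₁ - w‖ + ‖w - z₂‖) :
    sInf ((fun w => ‖z₁ - w‖ + ‖w - z₂‖) ''
        {w : ℂ | ‖w‖ = 1}) =
      ‖2 - Complex.exp (-(ψ : ℂ) * Complex.I) * z₁ -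
        Complex.exp ((ψ : ℂ) * Complex.I) * (starRingEnd ℂ) z₂‖ := by
  set w : ℂ := Complex.exp ((ψ : ℂ) * Complex.I) with hwdef
  have habs : ‖w‖ = 1 := Complex.norm_exp_ofReal_mul_I ψ
  have hconj : Complex.exp (-(ψ : ℂ) * Complex.I) = (starRingEnd ℂ) w := by
    rw [hwdef, ← Complex.exp_conj]
    congr 1
    simp [map_mul, Complex.conj_ofReal, Complex.conj_I]
  have hw1 : w * (starRingEnd ℂ) w = 1 := by
    rw [Complex.mul_conj]
    norm_cast
    rw [Complex.normSq_eq_norm_sq, habs]; norm_num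
  rw [hconj]
  set c : ℂ := 2 - (starRingEnd ℂ) w * z₁ - w * (starRingEnd ℂ) z₂ with hcdef
  set σ : ℂ := 2 * w - w ^ 2 * (starRingEnd ℂ) z₂ with hσdef
  have hrefl : ∀ p : ℂ, ((starRingEnd ℂ) w * p).re = 1 →
      p - σ = -w ^ 2 * (starRingEnd ℂ) (p - z₂) := by
    intro p hp
    have h2 : (starRingEnd ℂ) w * p + w * (starRingEnd ℂ) p = 2 := by
      have h := Complex.add_conj ((starRingEnd ℂ) w * p)
      rw [hp] at h
      rw [map_mul, Complex.conj_conj] at h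
      rw [h]; norm_num
    rw [hσdef, map_sub]
    linear_combination w * h2 - p * hw1
  have hzσ : z₁ - σ = -w * c := by
    rw [hσdef, hcdef]
    linear_combination -z₁ * hw1
  have habszσ : ‖z₁ - σ‖ = ‖c‖ := by
    rw [hzσ, norm_mul, norm_neg, habs, one_mul]
  have hps : ∀ p : ℂ, ((starRingEnd ℂ) w * p).re = 1 →
      ‖p - σ‖ = ‖p - z₂‖ := by
    intro p hp
    rw [hrefl p hp, norm_mul, norm_neg, norm_pow, habs, Complex.norm_conj]
    norm_num
  have hwre : ((starRingEnd ℂ) w * w).re = 1 := by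
    rw [mul_comm, hw1]; norm_num
  -- direction 1: |c| ≤ f w
  have hd1 : ‖c‖ ≤ ‖z₁ - w‖ + ‖w - z₂‖ := by
    calc ‖c‖ = ‖z₁ - σ‖ := habszσ.symm
      _ ≤ ‖z₁ - w‖ + ‖w - σ‖ := by
          have := norm_add_le (z₁ - w) (w - σ)
          simpa using this
      _ = ‖z₁ - w‖ + ‖w - z₂‖ := by rw [hps w hwre]
  -- direction 2: f w ≤ |c|, via the segment-crossing point p and projection
  set a : ℝ := ((starRingEnd ℂ) w * z₁).re with hadef
  set b : ℝ := ((starRingEnd ℂ) w * σ).re with hbdef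
  have ha : a < 1 := by
    have h1 : a ≤ ‖(starRingEnd ℂ) w * z₁‖ := Complex.re_le_norm _
    rw [norm_mul, Complex.norm_conj, habs, one_mul] at h1
    linarith
  have hb : 1 < b := by
    have hcwσ : (starRingEnd ℂ) w * σ = 2 - w * (starRingEnd ℂ) z₂ := by
      rw [hσdef]
      linear_combination (2 - w * (starRingEnd ℂ) z₂) * hw1
    have h1 : (w * (starRingEnd ℂ) z₂).re ≤ ‖w * (starRingEnd ℂ) z₂‖ :=
      Complex.re_le_norm _
    rw [norm_mul, Complex.norm_conj, habs, one_mul] at h1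
    have : b = 2 - (w * (starRingEnd ℂ) z₂).re := by
      rw [hbdef, hcwσ]; simp [Complex.sub_re]
    rw [this]; linarith
  have hba : (0:ℝ) < b - a := by linarith
  set t : ℝ := (1 - a) / (b - a) with htdef
  have ht0 : 0 ≤ t := div_nonneg (by linarith) (le_of_lt hba)
  have ht1 : t ≤ 1 := (div_le_one hba).mpr (by linarith)
  set p : ℂ := z₁ + (t : ℂ) * (σ - z₁) with hpdef
  have hpre : ((starRingEnd ℂ) w * p).re = 1 := by
    have hexp : (starRingEnd ℂ) w * p =
        (starRingEnd ℂ) w * z₁ + (t:ℂ) * ((starRingEnd ℂ) w * σ - (starRingEnd ℂ) w * z₁) := by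
      rw [hpdef]; ring
    rw [hexp, Complex.add_re, Complex.re_ofReal_mul, Complex.sub_re, ← hadef, ← hbdef]
    rw [htdef, div_mul_cancel₀ _ (ne_of_gt hba)]; ring
  have hple : 1 ≤ ‖p‖ := by
    have h1 : (1:ℝ) ≤ ‖(starRingEnd ℂ) w * p‖ := by
      rw [← hpre]; exact Complex.re_le_norm _
    rwa [norm_mul, Complex.norm_conj, habs, one_mul] at h1
  set u : ℂ := (↑(‖p‖))⁻¹ * p with hudef
  have habsu : ‖u‖ = 1 := by
    rw [hudef, norm_mul, norm_inv, Complex.norm_real, Real.norm_eq_abs,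
      _root_.abs_of_nonneg (norm_nonneg p)]
    exact inv_mul_cancel₀ (by positivity)
  have hproj1 : ‖z₁ - u‖ ≤ ‖z₁ - p‖ := proj_le_s6 p z₁ (le_of_lt hz₁) hple
  have hproj2 : ‖u - z₂‖ ≤ ‖p - z₂‖ := by
    rw [norm_sub_rev u z₂, norm_sub_rev p z₂]
    exact proj_le_s6 p z₂ (le_of_lt hz₂) hple
  have hseg : ‖z₁ - p‖ + ‖p - σ‖ = ‖z₁ - σ‖ := by
    have e1 : z₁ - p = -(t:ℂ) * (σ - z₁) := by rw [hpdef]; ring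
    have e2 : p - σ = ((t - 1 : ℝ):ℂ) * (σ - z₁) := by rw [hpdef]; push_cast; ring
    have e3 : z₁ - σ = -(1:ℂ) * (σ - z₁) := by ring
    rw [e1, e2, e3, norm_mul, norm_mul, norm_mul, norm_neg, Complex.norm_real, Real.norm_eq_abs,
      norm_neg, Complex.norm_real, Real.norm_eq_abs, norm_one, one_mul,
      _root_.abs_of_nonneg ht0, _root_.abs_of_nonpos (by linarith : t - 1 ≤ 0)]
    ring
  have hd2 : ‖z₁ - w‖ + ‖w - z₂‖ ≤ ‖c‖ := by
    calc ‖z₁ - w‖ + ‖w - z₂‖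
        ≤ ‖z₁ - u‖ + ‖u - z₂‖ := hψ u habsu
      _ ≤ ‖z₁ - p‖ + ‖p - z₂‖ := add_le_add hproj1 hproj2
      _ = ‖z₁ - p‖ + ‖p - σ‖ := by rw [hps p hpre]
      _ = ‖z₁ - σ‖ := hseg
      _ = ‖c‖ := habszσ
  -- infimum equals value at w
  have hinf : sInf ((fun w => ‖z₁ - w‖ + ‖w - z₂‖) ''
      {w : ℂ | ‖w‖ = 1}) = ‖z₁ - w‖ + ‖w - z₂‖ := by
    apply le_antisymm
    · exact csInf_le ⟨0, by rintro y ⟨v, hv, rfl⟩; positivity⟩ ⟨w, habs, rfl⟩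
    · exact le_csInf ⟨_, ⟨w, habs, rfl⟩⟩ (by rintro y ⟨v, hv, rfl⟩; exact hψ v hv)
  rw [hinf]
  exact le_antisymm hd2 hd1

theorem sU_eq_at_contact_point (z₁ z₂ : ℂ)
    (hz₁ : ‖z₁‖ < 1) (hz₂ : ‖z₂‖ < 1) (ψ : ℝ)
    (hψ : ∀ w : ℂ, ‖w‖ = 1 →
      ‖z₁ - Complex.exp ((ψ : ℂ) * Complex.I)‖ +
        ‖Complex.exp ((ψ : ℂ) * Complex.I) - z₂‖ ≤
      ‖z₁ - w‖ + ‖w - z₂‖) :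
    sInf ((fun w => ‖z₁ - w‖ + ‖w - z₂‖) ''
        {w : ℂ | ‖w‖ = 1}) =
      ‖2 - Complex.exp (-(ψ : ℂ) * Complex.I) * z₁ -
        Complex.exp ((ψ : ℂ) * Complex.I) * (starRingEnd ℂ) z₂‖ ∧
    (z₁ ≠ z₂ →
      sU z₁ z₂ = ‖z₁ - z₂‖ /
        ‖2 - Complex.exp (-(ψ : ℂ) * Complex.I) * z₁ -
          Complex.exp ((ψ : ℂ) * Complex.I) * (starRingEnd ℂ) z₂‖) := by
  have h := inf_eq_contact z₁ z₂ hz₁ hz₂ ψ hψ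
  refine ⟨h, fun _ => ?_⟩
  rw [sU, h]
end

section
/- Let z₁, z₂ ∈ 𝕌 and suppose ψ ∈ ℝ is such that e^{iψ} minimizes the function w ↦ |z₁ − w| + |w − z₂| over the unit circle {|w| = 1}. Then the complex numbers 1 − e^{−iψ} z₁ and 1 − e^{iψ} conj(z₂) have the same argument; equivalently, |(1 − e^{−iψ} z₁) + (1 − e^{iψ} conj(z₂))| = |1 − e^{−iψ} z₁| + |1 − e^{iψ} conj(z₂)|. -/
open Complex

private lemma aux_hasDerivAt_dist (x y ψ : ℝ)
    (h : (x - Real.cos ψ)^2 + (y - Real.sin ψ)^2 ≠ 0) :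
    HasDerivAt (fun θ => Real.sqrt ((x - Real.cos θ)^2 + (y - Real.sin θ)^2))
      ((x * Real.sin ψ - y * Real.cos ψ) /
        Real.sqrt ((x - Real.cos ψ)^2 + (y - Real.sin ψ)^2)) ψ := by
  have h1 : HasDerivAt (fun θ => (x - Real.cos θ)^2 + (y - Real.sin θ)^2)
      (2 * (x * Real.sin ψ - y * Real.cos ψ)) ψ := by
    have := (((hasDerivAt_const ψ x).sub (Real.hasDerivAt_cos ψ)).pow 2).add
      (((hasDerivAt_const ψ y).sub (Real.hasDerivAt_sin ψ)).pow 2)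
    convert this using 1
    · rfl
    · rfl
    · funext θ; rfl
    · simp only [Pi.sub_apply, Nat.cast_ofNat]; ring
  have h2 := h1.sqrt h
  convert h2 using 1
  rw [mul_div_mul_left _ _ (two_ne_zero)]

set_option maxHeartbeats 1000000 in
theorem contact_point_same_argument (z₁ z₂ : ℂ)
    (hz₁ : ‖z₁‖ < 1) (hz₂ : ‖z₂‖ < 1) (ψ : ℝ)
    (hψ : ∀ w : ℂ, ‖w‖ = 1 →
      ‖z₁ - Complex.exp ((ψ : ℂ) * Complex.I)‖ +
        ‖Complex.exp ((ψ : ℂ) * Complex.I) - z₂‖ ≤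
      ‖z₁ - w‖ + ‖w - z₂‖) :
    ‖(1 - Complex.exp (-(ψ : ℂ) * Complex.I) * z₁) +
        (1 - Complex.exp ((ψ : ℂ) * Complex.I) * (starRingEnd ℂ) z₂)‖ =
      ‖1 - Complex.exp (-(ψ : ℂ) * Complex.I) * z₁‖ +
        ‖1 - Complex.exp ((ψ : ℂ) * Complex.I) * (starRingEnd ℂ) z₂‖ := by
  set u : ℂ := Complex.exp ((ψ : ℂ) * Complex.I) with hu
  set v : ℂ := Complex.exp (-(ψ : ℂ) * Complex.I) with hv
  have habs : ∀ (z : ℂ) (θ : ℝ), ‖z - Complex.exp ((θ:ℂ) * Complex.I)‖ =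
      Real.sqrt ((z.re - Real.cos θ)^2 + (z.im - Real.sin θ)^2) := by
    intro z θ
    rw [Complex.norm_def, Complex.normSq_apply]
    simp only [Complex.sub_re, Complex.sub_im, Complex.exp_ofReal_mul_I_re,
      Complex.exp_ofReal_mul_I_im, sq]
  have huabs : ‖u‖ = 1 := Complex.norm_exp_ofReal_mul_I ψ
  have hexpneg : v = Complex.exp (((-ψ : ℝ):ℂ) * Complex.I) := by
    rw [hv]; norm_num
  have hvre : v.re = Real.cos ψ := by
    rw [hexpneg, Complex.exp_ofReal_mul_I_re, Real.cos_neg]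
  have hvim : v.im = -Real.sin ψ := by
    rw [hexpneg, Complex.exp_ofReal_mul_I_im, Real.sin_neg]
  have hure : u.re = Real.cos ψ := by rw [hu, Complex.exp_ofReal_mul_I_re]
  have huim : u.im = Real.sin ψ := by rw [hu, Complex.exp_ofReal_mul_I_im]
  have hvabs : ‖v‖ = 1 := by rw [hexpneg]; exact Complex.norm_exp_ofReal_mul_I _
  have hvu : v * u = 1 := by
    rw [hu, hv, ← Complex.exp_add, show -(ψ:ℂ) * Complex.I + (ψ:ℂ) * Complex.I = 0 by ring,
      Complex.exp_zero]
  -- positivity of the two distances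
  have hpos : ∀ z : ℂ, ‖z‖ < 1 → ∀ θ : ℝ,
      0 < (z.re - Real.cos θ)^2 + (z.im - Real.sin θ)^2 := by
    intro z hz θ
    rcases lt_or_eq_of_le (by positivity :
      (0:ℝ) ≤ (z.re - Real.cos θ)^2 + (z.im - Real.sin θ)^2) with h | h
    · exact h
    · exfalso
      have : ‖z - Complex.exp ((θ:ℂ) * Complex.I)‖ = 0 := by
        rw [habs, ← h, Real.sqrt_zero]
      have hze : z = Complex.exp ((θ:ℂ) * Complex.I) := by
        rwa [norm_eq_zero, sub_eq_zero] at this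
      rw [hze, Complex.norm_exp_ofReal_mul_I] at hz
      exact lt_irrefl 1 hz
  have h1pos := hpos z₁ hz₁ ψ
  have h2pos := hpos z₂ hz₂ ψ
  -- the distance function
  set g : ℝ → ℝ := fun θ =>
    Real.sqrt ((z₁.re - Real.cos θ)^2 + (z₁.im - Real.sin θ)^2) +
    Real.sqrt ((z₂.re - Real.cos θ)^2 + (z₂.im - Real.sin θ)^2) with hg
  set r₁ : ℝ := Real.sqrt ((z₁.re - Real.cos ψ)^2 + (z₁.im - Real.sin ψ)^2) with hr₁
  set r₂ : ℝ := Real.sqrt ((z₂.re - Real.cos ψ)^2 + (z₂.im - Real.sin ψ)^2) with hr₂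
  have hr₁pos : 0 < r₁ := Real.sqrt_pos.mpr h1pos
  have hr₂pos : 0 < r₂ := Real.sqrt_pos.mpr h2pos
  have hmin : ∀ θ : ℝ, g ψ ≤ g θ := by
    intro θ
    have := hψ (Complex.exp ((θ:ℂ) * Complex.I)) (Complex.norm_exp_ofReal_mul_I θ)
    rw [habs z₁ ψ, habs z₁ θ] at this
    rw [show ‖Complex.exp ((ψ:ℂ) * Complex.I) - z₂‖
        = ‖z₂ - Complex.exp ((ψ:ℂ) * Complex.I)‖ from norm_sub_rev _ _,
      show ‖Complex.exp ((θ:ℂ) * Complex.I) - z₂‖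
        = ‖z₂ - Complex.exp ((θ:ℂ) * Complex.I)‖ from norm_sub_rev _ _,
      habs z₂ ψ, habs z₂ θ] at this
    exact this
  have hloc : IsLocalMin g ψ := Filter.Eventually.of_forall hmin
  have hd : HasDerivAt g
      ((z₁.re * Real.sin ψ - z₁.im * Real.cos ψ) / r₁ +
       (z₂.re * Real.sin ψ - z₂.im * Real.cos ψ) / r₂) ψ :=
    (aux_hasDerivAt_dist z₁.re z₁.im ψ h1pos.ne').add
      (aux_hasDerivAt_dist z₂.re z₂.im ψ h2pos.ne')
  have hderiv0 := hloc.hasDerivAt_eq_zero hd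
  -- the two complex numbers
  set a : ℂ := 1 - v * z₁ with ha
  set b : ℂ := 1 - u * (starRingEnd ℂ) z₂ with hb
  have hare : a.re = 1 - (Real.cos ψ * z₁.re + Real.sin ψ * z₁.im) := by
    rw [ha]
    simp only [Complex.sub_re, Complex.one_re, Complex.mul_re, hvre, hvim]
    ring
  have haim : a.im = z₁.re * Real.sin ψ - z₁.im * Real.cos ψ := by
    rw [ha]
    simp only [Complex.sub_im, Complex.one_im, Complex.mul_im, hvre, hvim]
    ring
  have hbre : b.re = 1 - (Real.cos ψ * z₂.re + Real.sin ψ * z₂.im) := by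
    rw [hb]
    simp only [Complex.sub_re, Complex.one_re, Complex.mul_re, hure, huim,
      Complex.conj_re, Complex.conj_im]
    ring
  have hbim : b.im = -(z₂.re * Real.sin ψ - z₂.im * Real.cos ψ) := by
    rw [hb]
    simp only [Complex.sub_im, Complex.one_im, Complex.mul_im, hure, huim,
      Complex.conj_re, Complex.conj_im]
    ring
  -- |a| = r₁, |b| = r₂
  have habsa : ‖a‖ = r₁ := by
    have hfac : a = v * (u - z₁) := by rw [mul_sub, hvu, ha]
    rw [hfac, norm_mul, hvabs, one_mul, norm_sub_rev, hu, habs z₁ ψ]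
  have habsb : ‖b‖ = r₂ := by
    have hconju : (starRingEnd ℂ) u = v := by
      rw [hu, hv, ← Complex.exp_conj, map_mul, Complex.conj_I, Complex.conj_ofReal]
      ring_nf
    have hconj : (starRingEnd ℂ) b = v * (u - z₂) := by
      rw [mul_sub, hvu, hb, map_sub, map_one, map_mul, Complex.conj_conj, hconju]
    calc ‖b‖ = ‖(starRingEnd ℂ) b‖ := (Complex.norm_conj b).symm
      _ = r₂ := by
          rw [hconj, norm_mul, hvabs, one_mul, norm_sub_rev, hu, habs z₂ ψ]
  -- positivity of real parts
  have harepos : 0 < a.re := by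
    have h2 : (v * z₁).re ≤ ‖v * z₁‖ := Complex.re_le_norm _
    have h3 : ‖v * z₁‖ < 1 := by rw [norm_mul, hvabs, one_mul]; exact hz₁
    have h4 : (v * z₁).re = Real.cos ψ * z₁.re + Real.sin ψ * z₁.im := by
      simp only [Complex.mul_re, hvre, hvim]; ring
    rw [hare]; rw [h4] at h2; linarith
  have hbrepos : 0 < b.re := by
    have h2 : (u * (starRingEnd ℂ) z₂).re ≤ ‖u * (starRingEnd ℂ) z₂‖ :=
      Complex.re_le_norm _
    have h3 : ‖u * (starRingEnd ℂ) z₂‖ < 1 := by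
      rw [norm_mul, huabs, one_mul, Complex.norm_conj]; exact hz₂
    have h4 : (u * (starRingEnd ℂ) z₂).re = Real.cos ψ * z₂.re + Real.sin ψ * z₂.im := by
      simp only [Complex.mul_re, hure, huim, Complex.conj_re, Complex.conj_im]; ring
    rw [hbre]; rw [h4] at h2; linarith
  -- first order condition
  have hcond : a.im * r₂ = b.im * r₁ := by
    rw [haim, hbim]
    field_simp at hderiv0
    linarith
  -- norms squared
  have hra : a.re^2 + a.im^2 = r₁^2 := by
    have := Complex.sq_norm a
    rw [habsa, Complex.normSq_apply] at this
    linear_combination -this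
  have hrb : b.re^2 + b.im^2 = r₂^2 := by
    have := Complex.sq_norm b
    rw [habsb, Complex.normSq_apply] at this
    linear_combination -this
  -- key algebra
  have h1 : (a.re * b.re)^2 = (r₁ * r₂ - a.im * b.im)^2 := by
    linear_combination (b.re^2) * hra + (r₁^2 - a.im^2) * hrb + (b.im*r₁ - a.im*r₂) * hcond
  have h1a : |a.im| ≤ r₁ := by
    rw [← Real.sqrt_sq_eq_abs, ← Real.sqrt_sq hr₁pos.le]
    apply Real.sqrt_le_sqrt
    nlinarith [sq_nonneg a.re]
  have h1b : |b.im| ≤ r₂ := by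
    rw [← Real.sqrt_sq_eq_abs, ← Real.sqrt_sq hr₂pos.le]
    apply Real.sqrt_le_sqrt
    nlinarith [sq_nonneg b.re]
  have hle : a.im * b.im ≤ r₁ * r₂ := by
    calc a.im * b.im ≤ |a.im * b.im| := le_abs_self _
      _ = |a.im| * |b.im| := abs_mul _ _
      _ ≤ r₁ * r₂ := mul_le_mul h1a h1b (abs_nonneg _) hr₁pos.le
  have h2 : a.re * b.re = r₁ * r₂ - a.im * b.im := by
    have hpr : 0 < a.re * b.re := mul_pos harepos hbrepos
    rcases sq_eq_sq_iff_eq_or_eq_neg.mp h1 with h | h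
    · exact h
    · linarith
  -- finish
  have hsq : (‖a + b‖)^2 = (‖a‖ + ‖b‖)^2 := by
    rw [Complex.sq_norm, Complex.normSq_apply, Complex.add_re, Complex.add_im,
      habsa, habsb]
    linear_combination hra + hrb + 2 * h2
  have hn1 : (0:ℝ) ≤ ‖a + b‖ := norm_nonneg _
  have hn2 : (0:ℝ) ≤ ‖a‖ + ‖b‖ := by positivity
  calc ‖a + b‖ = Real.sqrt ((‖a + b‖)^2) := (Real.sqrt_sq hn1).symm
    _ = Real.sqrt ((‖a‖ + ‖b‖)^2) := by rw [hsq]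
    _ = ‖a‖ + ‖b‖ := Real.sqrt_sq hn2
end

section
/- Let D ⊆ ℂ be an open convex set, u, v ∈ D, and let w ∈ ∂D minimize the function ζ ↦ |u − ζ| + |ζ − v| over ∂D. Suppose n ∈ ℂ with |n| = 1 is an inward unit normal of a supporting line of D at w, i.e., Re(conj(n)(z − w)) > 0 for all z ∈ D. Then the unit vectors (u − w)/|u − w| and (v − w)/|v − w| make equal angles with n; equivalently, (u − w)/|u − w| + (v − w)/|v − w| = c · n for some real c ≥ 0. -/
open Complex Set

lemma abs_sub_quad (x h : ℂ) (hx : x ≠ 0) (hh : ‖h‖ ≤ ‖x‖) :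
    ‖x - h‖ ≤ ‖x‖ - ((starRingEnd ℂ) x * h).re / ‖x‖
      + (‖h‖)^2 / ‖x‖ := by
  set X := ‖x‖ with hXdef
  set H := ‖h‖ with hHdef
  set r := ((starRingEnd ℂ) x * h).re with hrdef
  have hX : 0 < X := norm_pos_iff.mpr hx
  have hH : 0 ≤ H := norm_nonneg h
  have hr : |r| ≤ X * H := by
    calc |r| ≤ ‖(starRingEnd ℂ) x * h‖ := Complex.abs_re_le_norm _
    _ = X * H := by rw [norm_mul, Complex.norm_conj]
  have hL2 : (‖x - h‖)^2 = X^2 - 2*r + H^2 := by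
    rw [Complex.sq_norm, Complex.normSq_sub]
    have : (x * (starRingEnd ℂ) h).re = r := by
      rw [hrdef]
      have : (starRingEnd ℂ) x * h = (starRingEnd ℂ) (x * (starRingEnd ℂ) h) := by
        rw [map_mul, Complex.conj_conj]
      rw [this, Complex.conj_re]
    rw [this, hXdef, hHdef, Complex.sq_norm, Complex.sq_norm]
    ring
  have hrX : r ≤ X * H := le_trans (le_abs_self r) hr
  have hRHS : 0 ≤ X - r/X + H^2/X := by
    have h1 : r / X ≤ H := by rw [div_le_iff₀ hX]; nlinarith
    nlinarith [sq_nonneg H, div_nonneg (sq_nonneg H) hX.le]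
  have hsq : (‖x - h‖)^2 ≤ (X - r/X + H^2/X)^2 := by
    have e : X - r/X + H^2/X = (X^2 - r + H^2)/X := by field_simp
    rw [hL2, e, div_pow, le_div_iff₀ (by positivity)]
    nlinarith [sq_nonneg (r - H^2), sq_nonneg (X*H), sq_nonneg X, sq_nonneg H]
  calc ‖x - h‖ = Real.sqrt ((‖x-h‖)^2) :=
        (Real.sqrt_sq (norm_nonneg _)).symm
    _ ≤ Real.sqrt ((X - r/X + H^2/X)^2) := Real.sqrt_le_sqrt hsq
    _ = X - r/X + H^2/X := Real.sqrt_sq hRHS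

lemma cross_frontier {D : Set ℂ} (hD : IsOpen D) {u ζ : ℂ} (hu : u ∈ D) (hz : ζ ∉ D) :
    ∃ τ : ℝ, 0 ≤ τ ∧ τ ≤ 1 ∧ u + τ • (ζ - u) ∈ frontier D := by
  set φ : ℝ → ℂ := fun t => u + t • (ζ - u) with hφ
  have hφc : Continuous φ := by continuity
  set K : Set ℝ := Icc (0:ℝ) 1 ∩ φ ⁻¹' Dᶜ with hK
  have hKc : IsClosed K := (isClosed_Icc).inter (hD.isClosed_compl.preimage hφc)
  have hKne : K.Nonempty := ⟨1, ⟨zero_le_one, le_refl 1⟩, by simpa [hφ] using hz⟩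
  have hKbdd : BddBelow K := ⟨0, fun t ht => ht.1.1⟩
  set τ := sInf K with hτ
  have hτK : τ ∈ K := hKc.csInf_mem hKne hKbdd
  have hτ0 : 0 ≤ τ := hτK.1.1
  have hτ1 : τ ≤ 1 := hτK.1.2
  have hτpos : 0 < τ := by
    rcases hτ0.lt_or_eq with h | h
    · exact h
    · exfalso; apply hτK.2; rw [← h]; simpa [hφ] using hu
  refine ⟨τ, hτ0, hτ1, ?_, by rw [hD.interior_eq]; exact hτK.2⟩
  have hIoo : ∀ t ∈ Ioo (0:ℝ) τ, φ t ∈ D := by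
    intro t ht
    by_contra hc
    have : t ∈ K := ⟨⟨ht.1.le, ht.2.le.trans hτ1⟩, hc⟩
    exact absurd (csInf_le hKbdd this) (not_le.mpr ht.2)
  have hne : (nhdsWithin τ (Iio τ)).NeBot := nhdsLT_neBot τ
  have htend : Filter.Tendsto φ (nhdsWithin τ (Iio τ)) (nhds (φ τ)) :=
    (hφc.tendsto τ).mono_left nhdsWithin_le_nhds
  apply mem_closure_of_tendsto htend
  have : Ioo (0:ℝ) τ ∈ nhdsWithin τ (Iio τ) :=
    Ioo_mem_nhdsLT_of_mem ⟨hτpos, le_refl τ⟩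
  exact Filter.mem_of_superset this (fun t ht => hIoo t ht)

theorem optical_property (D : Set ℂ) (hD : IsOpen D) (hconv : Convex ℝ D)
    (u v : ℂ) (hu : u ∈ D) (hv : v ∈ D)
    (w : ℂ) (hw : w ∈ frontier D)
    (hmin : ∀ ζ ∈ frontier D,
      ‖u - w‖ + ‖w - v‖ ≤
        ‖u - ζ‖ + ‖ζ - v‖)
    (n : ℂ) (hn : ‖n‖ = 1)
    (hnormal : ∀ z ∈ D, 0 < ((starRingEnd ℂ) n * (z - w)).re) :
    ∃ c : ℝ, 0 ≤ c ∧
      (u - w) / ((‖u - w‖ : ℝ) : ℂ) + (v - w) / ((‖v - w‖ : ℝ) : ℂ) =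
        (c : ℂ) * n := by
  have hwD : w ∉ D := by
    rw [hD.frontier_eq] at hw; exact hw.2
  have huw : u - w ≠ 0 := sub_ne_zero.mpr (fun h => hwD (h ▸ hu))
  have hvw : v - w ≠ 0 := sub_ne_zero.mpr (fun h => hwD (h ▸ hv))
  set A := ‖u - w‖ with hA
  set B := ‖v - w‖ with hB
  have hApos : 0 < A := norm_pos_iff.mpr huw
  have hBpos : 0 < B := norm_pos_iff.mpr hvw
  have hwv : ‖w - v‖ = B := by rw [hB]; exact norm_sub_rev w v
  -- Step 1: the open ellipse is contained in D
  have hellipse : ∀ ζ : ℂ, ‖u - ζ‖ + ‖ζ - v‖ < A + B → ζ ∈ D := by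
    intro ζ hζ
    by_contra hc
    obtain ⟨τ, hτ0, hτ1, hξ⟩ := cross_frontier hD hu hc
    set ξ := u + τ • (ζ - u) with hξdef
    have h1 : ‖u - ξ‖ = τ * ‖u - ζ‖ := by
      have he : u - ξ = (τ:ℂ) * (u - ζ) := by
        rw [hξdef, Complex.real_smul]; ring
      rw [he, norm_mul, Complex.norm_real, Real.norm_eq_abs, _root_.abs_of_nonneg hτ0]
    have h2 : ‖ξ - ζ‖ = ‖u - ζ‖ - τ * ‖u - ζ‖ := by
      have he : ξ - ζ = ((1 - τ : ℝ):ℂ) * (u - ζ) := by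
        rw [hξdef, Complex.real_smul]; push_cast; ring
      rw [he, norm_mul, Complex.norm_real, Real.norm_eq_abs, _root_.abs_of_nonneg (by linarith)]; ring
    have h3 : ‖ξ - v‖ ≤ ‖ξ - ζ‖ + ‖ζ - v‖ :=
      norm_sub_le_norm_sub_add_norm_sub ξ ζ v
    have h4 := hmin ξ hξ
    rw [hwv] at h4
    linarith
  -- Step 2: directions into the ellipse point into D
  set s : ℂ := (u - w) / (A:ℂ) + (v - w) / (B:ℂ) with hs
  have hkey : ∀ d : ℂ, 0 < ((starRingEnd ℂ) s * d).re → 0 < ((starRingEnd ℂ) n * d).re := by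
    intro d hd
    have hdne : d ≠ 0 := by rintro rfl; simp at hd
    have hdpos : 0 < ‖d‖ := norm_pos_iff.mpr hdne
    set r1 := ((starRingEnd ℂ) (u - w) * d).re with hr1
    set r2 := ((starRingEnd ℂ) (v - w) * d).re with hr2
    have hδeq : ((starRingEnd ℂ) s * d).re = r1 / A + r2 / B := by
      rw [hs, map_add, map_div₀, map_div₀, Complex.conj_ofReal, Complex.conj_ofReal,
        add_mul, div_mul_eq_mul_div, div_mul_eq_mul_div, Complex.add_re,
        Complex.div_ofReal_re, Complex.div_ofReal_re]
    set δ := r1 / A + r2 / B with hδ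
    rw [hδeq] at hd
    set K := (‖d‖)^2 * (1/A + 1/B) with hKdef
    have hKpos : 0 < K := by positivity
    set t := min (min A B / ‖d‖) (δ / (2*K)) with ht
    have htpos : 0 < t := lt_min (by positivity) (by positivity)
    have htd : t * ‖d‖ ≤ min A B := by
      have hle := min_le_left (min A B / ‖d‖) (δ / (2*K))
      calc t * ‖d‖ ≤ (min A B / ‖d‖) * ‖d‖ :=
            mul_le_mul_of_nonneg_right hle hdpos.le
      _ = min A B := div_mul_cancel₀ _ hdpos.ne'
    have htK : t * K ≤ δ / 2 := by
      have hle := min_le_right (min A B / ‖d‖) (δ / (2*K))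
      calc t * K ≤ (δ / (2*K)) * K := mul_le_mul_of_nonneg_right hle hKpos.le
      _ = δ / 2 := by field_simp
    have habs_td : ‖(t:ℂ) * d‖ = t * ‖d‖ := by
      rw [norm_mul, Complex.norm_real, Real.norm_eq_abs, abs_of_pos htpos]
    set ζ := w + (t:ℂ) * d with hζdef
    have hb1 : ‖u - ζ‖ ≤ A - (t*r1)/A + (t*‖d‖)^2/A := by
      have he : u - ζ = (u - w) - (t:ℂ)*d := by rw [hζdef]; ring
      have hsmall : ‖(t:ℂ)*d‖ ≤ ‖u - w‖ := by
        rw [habs_td, ← hA]; exact le_trans htd (min_le_left A B)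
      have hq := abs_sub_quad (u - w) ((t:ℂ)*d) huw hsmall
      have hre1 : ((starRingEnd ℂ) (u - w) * ((t:ℂ)*d)).re = t * r1 := by
        rw [hr1, show (starRingEnd ℂ) (u - w) * ((t:ℂ)*d)
            = (t:ℂ) * ((starRingEnd ℂ) (u-w) * d) by ring, Complex.re_ofReal_mul]
      rw [hre1, habs_td, ← hA] at hq
      rw [he]; exact hq
    have hb2 : ‖ζ - v‖ ≤ B - (t*r2)/B + (t*‖d‖)^2/B := by
      have he : ζ - v = -((v - w) - (t:ℂ)*d) := by rw [hζdef]; ring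
      have hsmall : ‖(t:ℂ)*d‖ ≤ ‖v - w‖ := by
        rw [habs_td, ← hB]; exact le_trans htd (min_le_right A B)
      have hq := abs_sub_quad (v - w) ((t:ℂ)*d) hvw hsmall
      have hre2 : ((starRingEnd ℂ) (v - w) * ((t:ℂ)*d)).re = t * r2 := by
        rw [hr2, show (starRingEnd ℂ) (v - w) * ((t:ℂ)*d)
            = (t:ℂ) * ((starRingEnd ℂ) (v-w) * d) by ring, Complex.re_ofReal_mul]
      rw [hre2, habs_td, ← hB] at hq
      rw [he, norm_neg]; exact hq
    have hsum : ‖u - ζ‖ + ‖ζ - v‖ < A + B := by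
      have heq : (A - (t*r1)/A + (t*‖d‖)^2/A) + (B - (t*r2)/B + (t*‖d‖)^2/B)
          = A + B - t*δ + t^2*K := by
        rw [hδ, hKdef]; field_simp; ring
      have hlt : A + B - t*δ + t^2*K < A + B := by
        clear_value t K δ r1 r2 A B
        have h5 : t^2*K = t*(t*K) := by ring
        have h6 : t*(δ/2) = (t*δ)/2 := by ring
        have h7 : t*(t*K) ≤ t*(δ/2) := mul_le_mul_of_nonneg_left htK htpos.le
        have h8 : 0 < t*δ := mul_pos htpos hd
        linarith
      calc ‖u - ζ‖ + ‖ζ - v‖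
          ≤ (A - (t*r1)/A + (t*‖d‖)^2/A) + (B - (t*r2)/B + (t*‖d‖)^2/B) :=
            add_le_add hb1 hb2
        _ = A + B - t*δ + t^2*K := heq
        _ < A + B := hlt
    have hζD : ζ ∈ D := hellipse ζ hsum
    have hpos := hnormal ζ hζD
    have hz : ζ - w = (t:ℂ)*d := by rw [hζdef]; ring
    rw [hz] at hpos
    have hre : ((starRingEnd ℂ) n * ((t:ℂ)*d)).re = t * ((starRingEnd ℂ) n * d).re := by
      rw [show (starRingEnd ℂ) n * ((t:ℂ)*d) = (t:ℂ) * ((starRingEnd ℂ) n * d) by ring,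
        Complex.re_ofReal_mul]
    rw [hre] at hpos
    by_contra hcon
    push_neg at hcon
    nlinarith
  -- Step 3: conclude
  by_cases hs0 : s = 0
  · exact ⟨0, le_refl 0, by rw [hs0]; simp⟩
  · have hsnorm : 0 < Complex.normSq s := Complex.normSq_pos.mpr hs0
    have hconjs : ((starRingEnd ℂ) s * s) = ((Complex.normSq s : ℝ) : ℂ) := by
      rw [mul_comm, Complex.mul_conj]
    have hp : 0 < ((starRingEnd ℂ) n * s).re := by
      apply hkey s
      rw [hconjs, Complex.ofReal_re]
      exact hsnorm
    set p := ((starRingEnd ℂ) n * s).re with hpdef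
    set q := ((starRingEnd ℂ) n * s).im with hqdef
    have hcre : ∀ (σ ε : ℝ) (z : ℂ), (((σ:ℂ)*Complex.I + (ε:ℂ)) * z).re = ε*z.re - σ*z.im := by
      intro σ ε z
      simp [Complex.mul_re, Complex.add_re, Complex.add_im, Complex.I_re, Complex.I_im,
        Complex.ofReal_re, Complex.ofReal_im, Complex.mul_im]
      all_goals ring
    have hIm : ∀ (σ ε : ℝ), 0 < ε → 0 < ε * p - σ * q := by
      intro σ ε hε
      have h1 : 0 < ((starRingEnd ℂ) s * (((σ:ℂ)*Complex.I + (ε:ℂ)) * s)).re := by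
        have e1 : (starRingEnd ℂ) s * (((σ:ℂ)*Complex.I + (ε:ℂ)) * s)
            = ((σ:ℂ)*Complex.I + (ε:ℂ)) * ((starRingEnd ℂ) s * s) := by ring
        rw [e1, hconjs, hcre, Complex.ofReal_re, Complex.ofReal_im]
        have : ε * Complex.normSq s - σ * 0 = ε * Complex.normSq s := by ring
        rw [this]
        positivity
      have h2 := hkey _ h1
      have e2 : (starRingEnd ℂ) n * (((σ:ℂ)*Complex.I + (ε:ℂ)) * s)
          = ((σ:ℂ)*Complex.I + (ε:ℂ)) * ((starRingEnd ℂ) n * s) := by ring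
      rw [e2, hcre] at h2
      exact h2
    have hq0 : q = 0 := by
      have hq1 : q ≤ 0 := by
        apply le_of_forall_pos_le_add
        intro η hη
        have h := hIm 1 (η/p) (div_pos hη hp)
        have hep : (η/p)*p = η := div_mul_cancel₀ _ hp.ne'
        linarith
      have hq2 : -q ≤ 0 := by
        apply le_of_forall_pos_le_add
        intro η hη
        have h := hIm (-1) (η/p) (div_pos hη hp)
        have hep : (η/p)*p = η := div_mul_cancel₀ _ hp.ne'
        linarith
      linarith
    have hns : (starRingEnd ℂ) n * s = ((p : ℝ) : ℂ) := by
      apply Complex.ext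
      · rw [Complex.ofReal_re]
      · rw [Complex.ofReal_im]; exact hq0
    have hn1 : n * (starRingEnd ℂ) n = 1 := by
      rw [Complex.mul_conj]
      norm_cast
      rw [Complex.normSq_eq_norm_sq, hn]
      norm_num
    refine ⟨p, hp.le, ?_⟩
    calc s = (n * (starRingEnd ℂ) n) * s := by rw [hn1, one_mul]
      _ = n * ((starRingEnd ℂ) n * s) := by ring
      _ = n * ((p : ℝ) : ℂ) := by rw [hns]
      _ = ((p : ℝ) : ℂ) * n := by ring
end

section
/- Let z₁, z₂ ∈ 𝕌 and suppose ψ ∈ ℝ is such that e^{iψ} minimizes the function w ↦ |z₁ − w| + |w − z₂| over the unit circle {|w| = 1}. Then |(1 − e^{−iψ} z₁)(1 − e^{iψ} conj(z₂))| ≤ (1/2) · |2 − e^{−iψ} z₁ − e^{iψ} conj(z₂)|. -/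
set_option maxHeartbeats 1000000

open Complex


theorem minSum_le_two (z₁ z₂ : ℂ) (h1 : ‖z₁‖ < 1) (h2 : ‖z₂‖ < 1)
    (s : ℝ) (hs : ∀ w : ℂ, ‖w‖ = 1 → s ≤ ‖z₁ - w‖ + ‖w - z₂‖) :
    s ≤ 2 := by
  obtain ⟨m, hm⟩ : ∃ x : ℝ, x = ‖z₂ - z₁‖ := ⟨_, rfl⟩
  have hm0 : 0 ≤ m := hm ▸ norm_nonneg _
  obtain ⟨d, hd⟩ : ∃ x : ℂ, x = if z₁ = z₂ then 1 else (z₂ - z₁) * ((m : ℂ))⁻¹ := ⟨_, rfl⟩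
  have hd1 : ‖d‖ = 1 := by
    rw [hd]; split_ifs with h
    · simp
    · have hmne : m ≠ 0 := by
        rw [hm]; simp only [ne_eq, norm_eq_zero, sub_eq_zero]; exact fun hh => h hh.symm
      rw [norm_mul, norm_inv, Complex.norm_real, Real.norm_eq_abs, _root_.abs_of_nonneg hm0, hm,
        mul_inv_cancel₀ (hm ▸ hmne)]
  have hz2 : z₂ = z₁ + (m:ℂ) * d := by
    rw [hd]; split_ifs with h
    · have hm0' : m = 0 := by rw [hm, h]; simp
      rw [hm0', h]; push_cast; ring
    · have hmne : (m:ℂ) ≠ 0 := by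
        simp only [ne_eq, Complex.ofReal_eq_zero]
        rw [hm]; simp only [norm_eq_zero, sub_eq_zero]; exact fun hh => h hh.symm
      field_simp
      ring
  obtain ⟨B, hB⟩ : ∃ x : ℝ, x = (z₁ * (starRingEnd ℂ) d).re := ⟨_, rfl⟩
  have hnd : Complex.normSq d = 1 := by
    rw [← Complex.sq_norm, hd1]; norm_num
  have hkey : ∀ t : ℝ, Complex.normSq (z₁ + (t:ℂ) * d) = Complex.normSq z₁ + 2*t*B + t^2 := by
    intro t
    rw [Complex.normSq_add]
    have ha : Complex.normSq ((t:ℂ)*d) = t^2 := by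
      rw [Complex.normSq_mul, hnd, Complex.normSq_ofReal]; ring
    have hb : (z₁ * (starRingEnd ℂ) ((t:ℂ)*d)).re = t * B := by
      rw [map_mul, Complex.conj_ofReal]
      rw [show z₁ * ((t:ℂ) * (starRingEnd ℂ) d) = (t:ℂ) * (z₁ * (starRingEnd ℂ) d) by ring]
      rw [Complex.re_ofReal_mul, hB]
    rw [ha, hb]; ring
  have hBsq : B^2 ≤ Complex.normSq z₁ := by
    have h3 : |B| ≤ ‖z₁ * (starRingEnd ℂ) d‖ := hB ▸ Complex.abs_re_le_norm _
    rw [norm_mul, Complex.norm_conj, hd1, mul_one] at h3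
    have h4 := Complex.sq_norm z₁
    nlinarith [abs_nonneg B, norm_nonneg z₁, _root_.sq_abs B]
  have hn1 : Complex.normSq z₁ < 1 := by
    have := Complex.sq_norm z₁
    nlinarith [norm_nonneg z₁]
  obtain ⟨D, hD⟩ : ∃ x : ℝ, x = B^2 + 1 - Complex.normSq z₁ := ⟨_, rfl⟩
  have hD0 : 0 < D := by rw [hD]; nlinarith
  have hsD : Real.sqrt D ≤ 1 := by
    rw [show (1:ℝ) = Real.sqrt 1 by simp]
    apply Real.sqrt_le_sqrt; rw [hD]; nlinarith
  have hsD0 : 0 ≤ Real.sqrt D := Real.sqrt_nonneg D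
  have hsDsq : Real.sqrt D ^ 2 = D := Real.sq_sqrt hD0.le
  have hBle : |B| ≤ Real.sqrt D := by
    rw [show |B| = Real.sqrt (B^2) by rw [Real.sqrt_sq_eq_abs]]
    apply Real.sqrt_le_sqrt; rw [hD]; nlinarith
  obtain ⟨tp, htp⟩ : ∃ x : ℝ, x = -B + Real.sqrt D := ⟨_, rfl⟩
  obtain ⟨tn, htn⟩ : ∃ x : ℝ, x = -B - Real.sqrt D := ⟨_, rfl⟩
  have hcirc : ∀ t : ℝ, (t + B)^2 = D → ‖z₁ + (t:ℂ)*d‖ = 1 := by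
    intro t ht
    have h4 : Complex.normSq (z₁ + (t:ℂ)*d) = 1 := by rw [hkey t, hD] at *; nlinarith
    have h5 := Complex.sq_norm (z₁ + (t:ℂ)*d)
    nlinarith [norm_nonneg (z₁ + (t:ℂ)*d)]
  have hwp : ‖z₁ + (tp:ℂ)*d‖ = 1 := hcirc tp (by rw [htp]; linear_combination hsDsq)
  have hwn : ‖z₁ + (tn:ℂ)*d‖ = 1 := hcirc tn (by rw [htn]; linear_combination hsDsq)
  have hmtp : m ≤ tp := by
    rcases le_or_gt (m + B) 0 with h | h
    · rw [htp]; linarith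
    · have h6 : Complex.normSq z₂ < 1 := by
        have := Complex.sq_norm z₂; nlinarith [norm_nonneg z₂]
      have h7 : Complex.normSq z₁ + 2*m*B + m^2 < 1 := by rw [← hkey m, ← hz2]; exact h6
      have h8 : (m+B)^2 < D := by rw [hD]; nlinarith
      have h9 : m + B < Real.sqrt D := by nlinarith
      rw [htp]; linarith
  have htn0 : tn ≤ 0 := by
    rw [htn]; cases abs_cases B with
    | inl h => linarith [hBle, h.1]
    | inr h => linarith [hBle, h.1]
  have htp0 : 0 ≤ tp := le_trans hm0 hmtp
  have habs : ∀ t : ℝ, ‖z₁ - (z₁ + (t:ℂ)*d)‖ = |t| := by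
    intro t
    rw [show z₁ - (z₁ + (t:ℂ)*d) = -((t:ℂ)*d) by ring, norm_neg, norm_mul, hd1,
      Complex.norm_real, Real.norm_eq_abs, mul_one]
  have habs2 : ∀ t : ℝ, ‖(z₁ + (t:ℂ)*d) - z₂‖ = |t - m| := by
    intro t
    rw [hz2]
    rw [show z₁ + (t:ℂ)*d - (z₁ + (m:ℂ)*d) = ((t - m : ℝ):ℂ)*d by push_cast; ring]
    rw [norm_mul, hd1, Complex.norm_real, Real.norm_eq_abs, mul_one]
  have e1 := hs _ hwp
  have e2 := hs _ hwn
  rw [habs tp, habs2 tp] at e1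
  rw [habs tn, habs2 tn] at e2
  rw [_root_.abs_of_nonneg htp0, _root_.abs_of_nonneg (by linarith : (0:ℝ) ≤ tp - m)] at e1
  rw [_root_.abs_of_nonpos htn0, _root_.abs_of_nonpos (by linarith : tn - m ≤ 0)] at e2
  have hteq : tp - tn = 2 * Real.sqrt D := by rw [htp, htn]; ring
  linarith

-- derivative of θ ↦ |z - e^{iθ}| (as sqrt of explicit quadratic)
theorem sqrt_term_hasDerivAt (z : ℂ) (hz : ‖z‖ < 1) (θ : ℝ) :
    HasDerivAt (fun t : ℝ => Real.sqrt ((z.re - Real.cos t)^2 + (z.im - Real.sin t)^2))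
      ((z.re * Real.sin θ - z.im * Real.cos θ) /
        Real.sqrt ((z.re - Real.cos θ)^2 + (z.im - Real.sin θ)^2)) θ := by
  have hu : HasDerivAt (fun t : ℝ => (z.re - Real.cos t)^2 + (z.im - Real.sin t)^2)
      (2*(z.re - Real.cos θ)*(Real.sin θ) + 2*(z.im - Real.sin θ)*(-(Real.cos θ))) θ := by
    have hc : HasDerivAt (fun t : ℝ => z.re - Real.cos t) (Real.sin θ) θ := by
      simpa using ((Real.hasDerivAt_cos θ).const_sub z.re)
    have hs : HasDerivAt (fun t : ℝ => z.im - Real.sin t) (-(Real.cos θ)) θ := by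
      simpa using ((Real.hasDerivAt_sin θ).const_sub z.im)
    have h1 := hc.pow 2
    have h2 := hs.pow 2
    refine (h1.add h2).congr_deriv ?_
    norm_num
  have hpos : 0 < (z.re - Real.cos θ)^2 + (z.im - Real.sin θ)^2 := by
    rcases lt_or_eq_of_le (by positivity : (0:ℝ) ≤ (z.re - Real.cos θ)^2 + (z.im - Real.sin θ)^2) with h | h
    · exact h
    · exfalso
      have h1 : z.re = Real.cos θ := by nlinarith [sq_nonneg (z.re - Real.cos θ), sq_nonneg (z.im - Real.sin θ)]
      have h2 : z.im = Real.sin θ := by nlinarith [sq_nonneg (z.re - Real.cos θ), sq_nonneg (z.im - Real.sin θ)]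
      have : ‖z‖ = 1 := by
        have hns : Complex.normSq z = 1 := by
          rw [Complex.normSq_apply, h1, h2]; have := Real.cos_sq_add_sin_sq θ; nlinarith
        have h5 := Complex.sq_norm z
        nlinarith [norm_nonneg z]
      linarith
  have h3 := (Real.hasDerivAt_sqrt (ne_of_gt hpos)).comp θ hu
  refine h3.congr_deriv ?_
  field_simp
  ring

theorem first_order (z₁ z₂ : ℂ)
    (hz₁ : ‖z₁‖ < 1) (hz₂ : ‖z₂‖ < 1) (ψ : ℝ)
    (hψ : ∀ w : ℂ, ‖w‖ = 1 →
      ‖z₁ - Complex.exp ((ψ : ℂ) * Complex.I)‖ +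
        ‖Complex.exp ((ψ : ℂ) * Complex.I) - z₂‖ ≤
      ‖z₁ - w‖ + ‖w - z₂‖) :
    (1 - Complex.exp (-(ψ:ℂ)*I) * z₁).im / ‖z₁ - Complex.exp ((ψ:ℂ)*I)‖
      + (1 - Complex.exp (-(ψ:ℂ)*I) * z₂).im / ‖Complex.exp ((ψ:ℂ)*I) - z₂‖ = 0 := by
  have habs1 : ∀ θ : ℝ, Real.sqrt ((z₁.re - Real.cos θ)^2 + (z₁.im - Real.sin θ)^2)
      = ‖z₁ - Complex.exp ((θ:ℂ)*I)‖ := by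
    intro θ
    rw [Complex.norm_def, Complex.normSq_apply]
    congr 1
    simp only [Complex.sub_re, Complex.sub_im, Complex.exp_ofReal_mul_I_re,
      Complex.exp_ofReal_mul_I_im]
    ring
  have habs2 : ∀ θ : ℝ, Real.sqrt ((z₂.re - Real.cos θ)^2 + (z₂.im - Real.sin θ)^2)
      = ‖Complex.exp ((θ:ℂ)*I) - z₂‖ := by
    intro θ
    rw [Complex.norm_def, Complex.normSq_apply]
    congr 1
    simp only [Complex.sub_re, Complex.sub_im, Complex.exp_ofReal_mul_I_re,
      Complex.exp_ofReal_mul_I_im]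
    ring
  have hmin : IsLocalMin (fun θ : ℝ => Real.sqrt ((z₁.re - Real.cos θ)^2 + (z₁.im - Real.sin θ)^2)
      + Real.sqrt ((z₂.re - Real.cos θ)^2 + (z₂.im - Real.sin θ)^2)) ψ := by
    apply Filter.Eventually.of_forall
    intro θ
    simp only [habs1, habs2]
    exact hψ _ (Complex.norm_exp_ofReal_mul_I θ)
  have hder := (sqrt_term_hasDerivAt z₁ hz₁ ψ).add (sqrt_term_hasDerivAt z₂ hz₂ ψ)
  have hzero := hmin.hasDerivAt_eq_zero hder
  have hq : Complex.exp (-(ψ:ℂ)*I) = Complex.exp (((-ψ:ℝ):ℂ)*I) := by push_cast; ring_nf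
  have hre : (Complex.exp (-(ψ:ℂ)*I)).re = Real.cos ψ := by
    rw [hq, Complex.exp_ofReal_mul_I_re, Real.cos_neg]
  have him : (Complex.exp (-(ψ:ℂ)*I)).im = -Real.sin ψ := by
    rw [hq, Complex.exp_ofReal_mul_I_im, Real.sin_neg]
  have hnum1 : z₁.re * Real.sin ψ - z₁.im * Real.cos ψ = (1 - Complex.exp (-(ψ:ℂ)*I) * z₁).im := by
    simp only [Complex.sub_im, Complex.mul_im, Complex.one_im, hre, him]
    ring
  have hnum2 : z₂.re * Real.sin ψ - z₂.im * Real.cos ψ = (1 - Complex.exp (-(ψ:ℂ)*I) * z₂).im := by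
    simp only [Complex.sub_im, Complex.mul_im, Complex.one_im, hre, him]
    ring
  rw [habs1 ψ, habs2 ψ, hnum1, hnum2] at hzero
  exact hzero


theorem contact_point_product_bound (z₁ z₂ : ℂ)
    (hz₁ : ‖z₁‖ < 1) (hz₂ : ‖z₂‖ < 1) (ψ : ℝ)
    (hψ : ∀ w : ℂ, ‖w‖ = 1 →
      ‖z₁ - Complex.exp ((ψ : ℂ) * Complex.I)‖ +
        ‖Complex.exp ((ψ : ℂ) * Complex.I) - z₂‖ ≤
      ‖z₁ - w‖ + ‖w - z₂‖) :
    ‖(1 - Complex.exp (-(ψ : ℂ) * Complex.I) * z₁) *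
        (1 - Complex.exp ((ψ : ℂ) * Complex.I) * (starRingEnd ℂ) z₂)‖ ≤
      (1 / 2) * ‖2 - Complex.exp (-(ψ : ℂ) * Complex.I) * z₁ -
        Complex.exp ((ψ : ℂ) * Complex.I) * (starRingEnd ℂ) z₂‖ := by
  set p : ℂ := Complex.exp ((ψ:ℂ)*I) with hp
  set q : ℂ := Complex.exp (-(ψ:ℂ)*I) with hq
  have hpq : q * p = 1 := by
    rw [hp, hq, ← Complex.exp_add]; ring_nf; exact Complex.exp_zero
  have habsp : ‖p‖ = 1 := Complex.norm_exp_ofReal_mul_I ψ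
  have hconjq : (starRingEnd ℂ) q = p := by
    rw [hq, hp, ← Complex.exp_conj]; congr 1; simp
  set α : ℂ := 1 - q * z₁ with hα
  set β : ℂ := 1 - q * z₂ with hβ
  have hcb : (starRingEnd ℂ) β = 1 - p * (starRingEnd ℂ) z₂ := by
    rw [hβ, map_sub, map_one, map_mul, hconjq]
  have hqz₁ : ‖q * z₁‖ = ‖z₁‖ := by
    rw [norm_mul, hq]
    rw [show -(ψ:ℂ)*I = ((-ψ:ℝ):ℂ)*I by push_cast; ring, Complex.norm_exp_ofReal_mul_I, one_mul]
  have hqz₂ : ‖q * z₂‖ = ‖z₂‖ := by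
    rw [norm_mul, hq]
    rw [show -(ψ:ℂ)*I = ((-ψ:ℝ):ℂ)*I by push_cast; ring, Complex.norm_exp_ofReal_mul_I, one_mul]
  have hre₁ : 0 < α.re := by
    have h1 : (q*z₁).re ≤ ‖z₁‖ := hqz₁ ▸ Complex.re_le_norm (q*z₁)
    have : α.re = 1 - (q*z₁).re := by rw [hα]; simp
    rw [this]; linarith
  have hre₂ : 0 < β.re := by
    have h1 : (q*z₂).re ≤ ‖z₂‖ := hqz₂ ▸ Complex.re_le_norm (q*z₂)
    have : β.re = 1 - (q*z₂).re := by rw [hβ]; simp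
    rw [this]; linarith
  obtain ⟨a, ha⟩ : ∃ x : ℝ, x = ‖α‖ := ⟨_, rfl⟩
  obtain ⟨b, hb⟩ : ∃ x : ℝ, x = ‖β‖ := ⟨_, rfl⟩
  have ha0 : 0 < a := by
    rw [ha]; apply norm_pos_iff.mpr; intro h; rw [h] at hre₁; simp at hre₁
  have hb0 : 0 < b := by
    rw [hb]; apply norm_pos_iff.mpr; intro h; rw [h] at hre₂; simp at hre₂
  have ha2 : a^2 = α.re^2 + α.im^2 := by
    rw [ha, Complex.sq_norm, Complex.normSq_apply]; ring
  have hb2 : b^2 = β.re^2 + β.im^2 := by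
    rw [hb, Complex.sq_norm, Complex.normSq_apply]; ring
  have ha1 : ‖z₁ - p‖ = a := by
    have h1 : z₁ - p = -(p * α) := by
      rw [hα, mul_sub, mul_one, show p * (q * z₁) = (q * p) * z₁ by ring, hpq, one_mul]; ring
    rw [h1, norm_neg, norm_mul, habsp, one_mul, ha]
  have hb1 : ‖p - z₂‖ = b := by
    have h1 : p - z₂ = p * β := by
      rw [hβ, mul_sub, mul_one, show p * (q * z₂) = (q * p) * z₂ by ring, hpq, one_mul]
    rw [h1, norm_mul, habsp, one_mul, hb]
  -- first-order condition
  have hfo := first_order z₁ z₂ hz₁ hz₂ ψ hψ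
  rw [← hp, ← hq, ← hα, ← hβ, ha1, hb1] at hfo
  have hIm : b * α.im + a * β.im = 0 := by
    have h2 : α.im / a + β.im / b = 0 := hfo
    field_simp at h2
    linarith
  -- equal-slope fact
  have h1 : (b*α.im)^2 = (a*β.im)^2 := by
    have : b * α.im = -(a * β.im) := by linarith
    rw [this]; ring
  have hsq : (b*α.re)^2 = (a*β.re)^2 := by
    linear_combination a^2 * hb2 - b^2 * ha2 - h1
  have hRe : b * α.re = a * β.re := by
    have h3 : (b*α.re - a*β.re) * (b*α.re + a*β.re) = 0 := by linear_combination hsq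
    rcases mul_eq_zero.mp h3 with h | h
    · linarith
    · nlinarith [mul_pos hb0 hre₁, mul_pos ha0 hre₂]
  have hprod : α.re*β.re - α.im*β.im = a*b := by
    have h4 : a * (α.re*β.re - α.im*β.im) = a * (a*b) := by
      linear_combination (-α.re) * hRe + (-α.im) * hIm + (-b) * ha2
    exact mul_left_cancel₀ (ne_of_gt ha0) h4
  have hsum : ‖α + (starRingEnd ℂ) β‖ = a + b := by
    have h5 : (‖α + (starRingEnd ℂ) β‖)^2 = (a+b)^2 := by
      rw [Complex.sq_norm, Complex.normSq_apply]
      simp only [Complex.add_re, Complex.add_im, Complex.conj_re, Complex.conj_im]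
      linear_combination (-1)*ha2 + (-1)*hb2 + 2*hprod
    nlinarith [norm_nonneg (α + (starRingEnd ℂ) β), add_pos ha0 hb0]
  -- minimal sum ≤ 2
  have hS : a + b ≤ 2 := by
    apply minSum_le_two z₁ z₂ hz₁ hz₂
    intro w hw
    calc a + b = ‖z₁ - p‖ + ‖p - z₂‖ := by rw [ha1, hb1]
    _ ≤ ‖z₁ - w‖ + ‖w - z₂‖ := hψ w hw
  -- rewrite the goal
  have hg1 : (1 : ℂ) - p * (starRingEnd ℂ) z₂ = (starRingEnd ℂ) β := hcb.symm
  have hg2 : (2 : ℂ) - q * z₁ - p * (starRingEnd ℂ) z₂ = α + (starRingEnd ℂ) β := by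
    rw [hcb, hα]; ring
  rw [hg1, hg2, norm_mul, hsum, ← ha]
  have hcbabs : ‖(starRingEnd ℂ) β‖ = b := (Complex.norm_conj β).trans hb.symm
  rw [hcbabs]
  nlinarith [sq_nonneg (a-b), mul_le_mul_of_nonneg_left hS (add_pos ha0 hb0).le]
end

section
/- Let 0 < a < 1, θ ∈ ℝ, and let R > 0 satisfy |(1 − R) e^{iθ} + 1/a| = R. Then R ≥ (1/2)(1 + 1/a); consequently 1 + a ≥ 2R/(2R − 1). -/
open Complex

theorem radius_lower_bound (a : ℝ) (ha0 : 0 < a) (ha1 : a < 1) (θ : ℝ)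
    (R : ℝ) (hR : 0 < R)
    (hcirc : ‖(1 - (R : ℂ)) * Complex.exp ((θ : ℂ) * Complex.I) +
      1 / (a : ℂ)‖ = R) :
    (1 / 2) * (1 + 1 / a) ≤ R ∧ 2 * R / (2 * R - 1) ≤ 1 + a := by
  have he : ‖Complex.exp ((θ : ℂ) * Complex.I)‖ = 1 :=
    Complex.norm_exp_ofReal_mul_I θ
  have ha1' : 1 < 1 / a := by
    rw [lt_div_iff₀ ha0]; linarith
  have key : 1 / a ≤ R + |1 - R| := by
    have : (1 / (a : ℂ)) = ((1 - (R : ℂ)) * Complex.exp ((θ : ℂ) * Complex.I) +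
        1 / (a : ℂ)) - (1 - (R : ℂ)) * Complex.exp ((θ : ℂ) * Complex.I) := by ring
    calc 1 / a = ‖1 / (a : ℂ)‖ := by
          rw [norm_div, norm_one, Complex.norm_real, Real.norm_eq_abs, abs_of_pos ha0]
      _ = ‖((1 - (R : ℂ)) * Complex.exp ((θ : ℂ) * Complex.I) +
            1 / (a : ℂ)) - (1 - (R : ℂ)) * Complex.exp ((θ : ℂ) * Complex.I)‖ :=
          congrArg (‖·‖) this
      _ ≤ ‖(1 - (R : ℂ)) * Complex.exp ((θ : ℂ) * Complex.I) +
            1 / (a : ℂ)‖ + ‖(1 - (R : ℂ)) * Complex.exp ((θ : ℂ) * Complex.I)‖ :=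
          norm_sub_le _ _
      _ = R + |1 - R| := by
          rw [hcirc, norm_mul, he, mul_one]
          congr 1
          rw [← Real.norm_eq_abs, ← Complex.norm_real]
          norm_cast
  have hR1 : 1 ≤ R := by
    by_contra h
    push_neg at h
    rw [abs_of_pos (by linarith)] at key
    linarith
  rw [abs_of_nonpos (by linarith)] at key
  have h1 : 1 / a ≤ 2 * R - 1 := by linarith
  constructor
  · linarith
  · have h2 : (0:ℝ) < 2 * R - 1 := by linarith
    rw [div_le_iff₀ h2]
    have : 1 ≤ a * (2 * R - 1) := by
      rw [← div_le_iff₀' ha0]; exact h1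
    nlinarith
end
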